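/- arXiv:1708.03708 — 7 statements merged into one kernel-verified Lean document; each statement's English description precedes it below -/
import Mathlib

section
/- Let m be a positive integer, K a real symmetric positive semidefinite m×m matrix, γ, λ, η > 0, and K_γ = K + γmI. Let K̄_γ be a real symmetric positive semidefinite m×m matrix with ‖K_γ − K̄_γ‖₂ ≤ ηm. Let Y ∈ ℝ^m with ‖Y‖₂ ≤ √m, and set α_γ = (K_γ + λmI)⁻¹ Y and ᾱ_γ = (K̄_γ + λmI)⁻¹ Y. Then ‖K̄_γ ᾱ_γ − Y‖₂ ≤ ‖K_γ α_γ − Y‖₂ + η√m/(λ + γ). -/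
open Matrix

/-- Spectral (operator 2-) norm of a real square matrix. -/
noncomputable def spectralNorm2 {m : ℕ} (A : Matrix (Fin m) (Fin m) ℝ) : ℝ :=
  ‖Matrix.toEuclideanCLM (𝕜 := ℝ) A‖

/-- Euclidean (ℓ²) norm of a vector in ℝ^m. -/
noncomputable def l2norm {m : ℕ} (v : Fin m → ℝ) : ℝ :=
  Real.sqrt (∑ i, v i ^ 2)

lemma l2norm_eq {m : ℕ} (v : Fin m → ℝ) :
    l2norm v = ‖(WithLp.equiv 2 (Fin m → ℝ)).symm v‖ := by
  simp [l2norm, EuclideanSpace.norm_eq, Real.norm_eq_abs, sq_abs]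

lemma l2norm_nonneg {m : ℕ} (v : Fin m → ℝ) : 0 ≤ l2norm v := by
  rw [l2norm_eq]; exact norm_nonneg _

lemma l2norm_smul {m : ℕ} (c : ℝ) (v : Fin m → ℝ) : l2norm (c • v) = |c| * l2norm v := by
  have h : (WithLp.equiv 2 (Fin m → ℝ)).symm (c • v)
      = c • (WithLp.equiv 2 (Fin m → ℝ)).symm v := rfl
  rw [l2norm_eq, l2norm_eq, h, norm_smul, Real.norm_eq_abs]

lemma l2norm_add_le {m : ℕ} (v w : Fin m → ℝ) : l2norm (v + w) ≤ l2norm v + l2norm w := by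
  have h : (WithLp.equiv 2 (Fin m → ℝ)).symm (v + w)
      = (WithLp.equiv 2 (Fin m → ℝ)).symm v + (WithLp.equiv 2 (Fin m → ℝ)).symm w := rfl
  rw [l2norm_eq, l2norm_eq, l2norm_eq, h]
  exact norm_add_le _ _

lemma l2norm_mulVec_le {m : ℕ} (A : Matrix (Fin m) (Fin m) ℝ) (x : Fin m → ℝ) :
    l2norm (A *ᵥ x) ≤ spectralNorm2 A * l2norm x := by
  have h := (Matrix.toEuclideanCLM (𝕜 := ℝ) A).le_opNorm ((WithLp.equiv 2 (Fin m → ℝ)).symm x)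
  rw [show (Matrix.toEuclideanCLM (𝕜 := ℝ) A) ((WithLp.equiv 2 (Fin m → ℝ)).symm x) = (WithLp.equiv 2 (Fin m → ℝ)).symm (A *ᵥ x) from rfl] at h
  rw [l2norm_eq, l2norm_eq]
  exact h

lemma dotProduct_self_eq {m : ℕ} (v : Fin m → ℝ) : v ⬝ᵥ v = (l2norm v) ^ 2 := by
  rw [l2norm, Real.sq_sqrt (by positivity)]
  simp [dotProduct, sq]

lemma smul_one_posDef {m : ℕ} {c : ℝ} (hc : 0 < c) :
    ((c • 1 : Matrix (Fin m) (Fin m) ℝ)).PosDef := by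
  exact Matrix.PosDef.smul Matrix.PosDef.one hc

lemma mulVec_lower {m : ℕ} (M : Matrix (Fin m) (Fin m) ℝ) (hM : M.PosSemidef) {c : ℝ}
    (hc : 0 < c) (v : Fin m → ℝ) : c * l2norm v ≤ l2norm ((M + c • 1) *ᵥ v) := by
  rcases eq_or_ne v 0 with rfl | hv
  · simp [l2norm]
  have h0 : 0 ≤ v ⬝ᵥ (M *ᵥ v) := by simpa using hM.re_dotProduct_nonneg v
  have hdot : v ⬝ᵥ ((M + c • 1) *ᵥ v) = v ⬝ᵥ (M *ᵥ v) + c * (v ⬝ᵥ v) := by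
    simp [Matrix.add_mulVec, dotProduct_add, Matrix.smul_mulVec,
      Matrix.one_mulVec, smul_eq_mul, dotProduct_smul]
  have hCS : v ⬝ᵥ ((M + c • 1) *ᵥ v) ≤ l2norm v * l2norm ((M + c • 1) *ᵥ v) := by
    have h := real_inner_le_norm ((WithLp.equiv 2 (Fin m → ℝ)).symm v)
      ((WithLp.equiv 2 (Fin m → ℝ)).symm ((M + c • 1) *ᵥ v))
    rw [show inner ℝ ((WithLp.equiv 2 (Fin m → ℝ)).symm v) ((WithLp.equiv 2 (Fin m → ℝ)).symm ((M + c • 1) *ᵥ v)) = v ⬝ᵥ ((M + c • 1) *ᵥ v) from by rw [dotProduct_comm]; rfl] at h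
    simpa [l2norm_eq] using h
  have hvpos : 0 < l2norm v := by
    rcases (l2norm_nonneg v).lt_or_eq with h | h
    · exact h
    · exfalso; apply hv
      have := h.symm
      rw [l2norm_eq, norm_eq_zero] at this
      simpa using congrArg (WithLp.equiv 2 (Fin m → ℝ)) this
  have hvv := dotProduct_self_eq v
  nlinarith [l2norm_nonneg ((M + c • 1) *ᵥ v)]

lemma inv_mulVec_le {m : ℕ} (M : Matrix (Fin m) (Fin m) ℝ) (hM : M.PosSemidef) {c : ℝ}
    (hc : 0 < c) (x : Fin m → ℝ) :
    l2norm ((M + c • 1)⁻¹ *ᵥ x) ≤ l2norm x / c := by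
  have hB : (M + c • 1).PosDef := Matrix.PosDef.posSemidef_add hM (smul_one_posDef hc)
  have hinv : (M + c • 1) * (M + c • 1)⁻¹ = 1 :=
    Matrix.mul_nonsing_inv _ hB.det_pos.ne'.isUnit
  have h := mulVec_lower M hM hc ((M + c • 1)⁻¹ *ᵥ x)
  rw [Matrix.mulVec_mulVec, hinv, Matrix.one_mulVec] at h
  rw [le_div_iff₀ hc]
  linarith

/-- Sparsification error bound (Lemma 1, part 1). -/
theorem sparsification_error {m : ℕ} (hm : 0 < m)
    (K Kbar : Matrix (Fin m) (Fin m) ℝ)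
    (hK : K.PosSemidef) (hKbar : Kbar.PosSemidef)
    (γ lam η : ℝ) (hγ : 0 < γ) (hlam : 0 < lam) (hη : 0 < η)
    (Kγ : Matrix (Fin m) (Fin m) ℝ) (hKγ : Kγ = K + (γ * m) • 1)
    (hclose : spectralNorm2 (Kγ - Kbar) ≤ η * m)
    (Y : Fin m → ℝ) (hY : l2norm Y ≤ Real.sqrt m)
    (αγ αbarγ : Fin m → ℝ)
    (hαγ : αγ = (Kγ + (lam * m) • 1)⁻¹ *ᵥ Y)
    (hαbarγ : αbarγ = (Kbar + (lam * m) • 1)⁻¹ *ᵥ Y) :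
    l2norm (Kbar *ᵥ αbarγ - Y) ≤
      l2norm (Kγ *ᵥ αγ - Y) + η * Real.sqrt m / (lam + γ) := by
  have hmR : (0:ℝ) < m := by exact_mod_cast hm
  set d : ℝ := lam * m with hd
  have hdpos : 0 < d := by positivity
  set A := Kγ + d • 1 with hA
  set B := Kbar + d • 1 with hB
  have hc2 : (0:ℝ) < γ * m + d := by positivity
  have hAeq : A = K + (γ * m + d) • 1 := by
    rw [hA, hKγ, add_assoc, ← add_smul]
  have hApd : A.PosDef := by
    rw [hAeq]; exact Matrix.PosDef.posSemidef_add hK (smul_one_posDef hc2)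
  have hBpd : B.PosDef := Matrix.PosDef.posSemidef_add hKbar (smul_one_posDef hdpos)
  have hAinv : A * A⁻¹ = 1 := Matrix.mul_nonsing_inv _ hApd.det_pos.ne'.isUnit
  have hBinv' : B⁻¹ * B = 1 := Matrix.nonsing_inv_mul _ hBpd.det_pos.ne'.isUnit
  set u := A⁻¹ *ᵥ Y with hu
  set ub := B⁻¹ *ᵥ Y with hub
  have hAu : A *ᵥ u = Y := by rw [hu, Matrix.mulVec_mulVec, hAinv, Matrix.one_mulVec]
  have hBub : B *ᵥ ub = Y := by
    rw [hub, Matrix.mulVec_mulVec, Matrix.mul_nonsing_inv _ hBpd.det_pos.ne'.isUnit,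
      Matrix.one_mulVec]
  -- residual identities
  have hresA : Kγ *ᵥ αγ - Y = (-d) • u := by
    have h1 : Kγ = A - d • 1 := by rw [hA, add_sub_cancel_right]
    rw [hαγ, h1, Matrix.sub_mulVec, hAu, Matrix.smul_mulVec, Matrix.one_mulVec,
      neg_smul]
    abel
  have hresB : Kbar *ᵥ αbarγ - Y = (-d) • ub := by
    have h1 : Kbar = B - d • 1 := by rw [hB, add_sub_cancel_right]
    rw [hαbarγ, h1, Matrix.sub_mulVec, hBub, Matrix.smul_mulVec, Matrix.one_mulVec,
      neg_smul]
    abel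
  -- difference decomposition
  set w := B⁻¹ *ᵥ ((Kγ - Kbar) *ᵥ u) with hw
  have hdiff : ub = u + w := by
    have hab : A - B = Kγ - Kbar := by rw [hA, hB]; abel
    have hmat : B⁻¹ * (Kγ - Kbar) * A⁻¹ = B⁻¹ - A⁻¹ := by
      rw [← hab, Matrix.mul_sub, Matrix.sub_mul, Matrix.mul_assoc, hAinv, hBinv',
        Matrix.mul_one, Matrix.one_mul]
    have hw2 : w = (B⁻¹ - A⁻¹) *ᵥ Y := by
      rw [hw, hu, Matrix.mulVec_mulVec, Matrix.mulVec_mulVec, hmat]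
    rw [hw2, Matrix.sub_mulVec, ← hub, ← hu]
    abel
  -- norm bounds
  have hbu : l2norm u ≤ Real.sqrt m / (γ * m + d) := by
    have h := inv_mulVec_le K hK hc2 Y
    rw [← hAeq, ← hu] at h
    exact h.trans (by gcongr)
  have hbw : l2norm w ≤ (η * m) * l2norm u / d := by
    have h1 : l2norm w ≤ l2norm ((Kγ - Kbar) *ᵥ u) / d := by
      have := inv_mulVec_le Kbar hKbar hdpos ((Kγ - Kbar) *ᵥ u)
      rwa [← hB, ← hw] at this
    have h2 : l2norm ((Kγ - Kbar) *ᵥ u) ≤ (η * m) * l2norm u :=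
      (l2norm_mulVec_le _ _).trans (by gcongr; exact l2norm_nonneg u)
    exact h1.trans (by gcongr)
  -- put everything together
  rw [hresA, hresB, l2norm_smul, l2norm_smul, abs_neg, abs_of_pos hdpos]
  have key : d * l2norm ub ≤ d * l2norm u + d * ((η * m) * (Real.sqrt m / (γ * m + d)) / d) := by
    have t1 : l2norm ub ≤ l2norm u + l2norm w := by
      rw [hdiff]; exact l2norm_add_le _ _
    have t2 : l2norm w ≤ (η * m) * (Real.sqrt m / (γ * m + d)) / d := by
      refine hbw.trans ?_
      gcongr
    nlinarith [l2norm_nonneg u, l2norm_nonneg w]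
  refine key.trans ?_
  have : d * ((η * m) * (Real.sqrt m / (γ * m + d)) / d) = η * Real.sqrt m / (lam + γ) := by
    rw [hd]
    field_simp
    ring
  rw [this]
end

section
/- Let m be a positive integer, K a real symmetric positive semidefinite m×m matrix, λ > 0, B ≥ 0, and Y ∈ ℝ^m. Set α = (K + λmI)⁻¹ Y. Then for every β ∈ ℝ^m with βᵀKβ ≤ B, one has ‖K α − Y‖₂ ≤ ‖K β − Y‖₂ + √(λ m B). -/
open Matrix

lemma l2norm_eq_sqrt_dot {m : ℕ} (v : Fin m → ℝ) :
    l2norm v = Real.sqrt (v ⬝ᵥ v) := by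
  simp [l2norm, dotProduct, sq]

lemma sqrt_add_le' {x y : ℝ} (hx : 0 ≤ x) (hy : 0 ≤ y) :
    Real.sqrt (x + y) ≤ Real.sqrt x + Real.sqrt y := by
  have h : Real.sqrt (x + y) ≤ Real.sqrt ((Real.sqrt x + Real.sqrt y) ^ 2) := by
    apply Real.sqrt_le_sqrt
    nlinarith [Real.sq_sqrt hx, Real.sq_sqrt hy, Real.sqrt_nonneg x, Real.sqrt_nonneg y,
      mul_nonneg (Real.sqrt_nonneg x) (Real.sqrt_nonneg y)]
  rwa [Real.sqrt_sq (by positivity)] at h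

/-- Lagrangian relaxation error bound (Lemma 1, part 3). -/
theorem lagrangian_relaxation_error {m : ℕ} (hm : 0 < m)
    (K : Matrix (Fin m) (Fin m) ℝ) (hK : K.PosSemidef)
    (lam B : ℝ) (hlam : 0 < lam) (hB : 0 ≤ B)
    (Y : Fin m → ℝ)
    (α : Fin m → ℝ) (hα : α = (K + (lam * m) • 1)⁻¹ *ᵥ Y)
    (β : Fin m → ℝ) (hβ : β ⬝ᵥ (K *ᵥ β) ≤ B) :
    l2norm (K *ᵥ α - Y) ≤ l2norm (K *ᵥ β - Y) + Real.sqrt (lam * m * B) := by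
  set c : ℝ := lam * m with hc_def
  have hc : 0 < c := by positivity
  set M : Matrix (Fin m) (Fin m) ℝ := K + c • 1 with hM_def
  have hMh : M.IsHermitian := hK.1.add (by simp [Matrix.IsHermitian])
  have hM : M.PosDef := by
    refine Matrix.PosDef.of_dotProduct_mulVec_pos hMh (fun x hx => ?_)
    have h1 : (0:ℝ) ≤ x ⬝ᵥ (K *ᵥ x) := by simpa using hK.dotProduct_mulVec_nonneg x
    have h2 : (0:ℝ) < x ⬝ᵥ x := by
      rcases Function.ne_iff.mp hx with ⟨i, hi⟩
      have : (0:ℝ) < ∑ j, x j * x j :=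
        Finset.sum_pos' (fun j _ => mul_self_nonneg _)
          ⟨i, Finset.mem_univ i, mul_self_pos.mpr hi⟩
      simpa [dotProduct] using this
    have hexp : x ⬝ᵥ (M *ᵥ x) = x ⬝ᵥ (K *ᵥ x) + c * (x ⬝ᵥ x) := by
      simp [hM_def, add_mulVec, smul_mulVec, dotProduct_add, dotProduct_smul, smul_eq_mul]
    simp only [star_trivial]
    rw [hexp]
    nlinarith
  have hMα : M *ᵥ α = Y := by
    rw [hα, mulVec_mulVec, Matrix.mul_nonsing_inv _ hM.det_pos.ne'.isUnit, one_mulVec]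
  -- Y = K α + c α
  have hY : Y = K *ᵥ α + c • α := by
    rw [← hMα, hM_def, add_mulVec, smul_mulVec, one_mulVec]
  -- symmetry of K on dot products
  have hKsym : ∀ u v : Fin m → ℝ, u ⬝ᵥ (K *ᵥ v) = v ⬝ᵥ (K *ᵥ u) := by
    intro u v
    rw [Matrix.dotProduct_mulVec, ← Matrix.mulVec_transpose, dotProduct_comm]
    congr 1
    have : Kᵀ = K := by
      have := hK.1
      rwa [Matrix.IsHermitian, conjTranspose_eq_transpose_of_trivial] at this
    rw [this]
  set d : Fin m → ℝ := β - α with hd_def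
  have hbeta : β = α + d := by simp [hd_def]
  set e : Fin m → ℝ := K *ᵥ d with he_def
  -- atoms
  have hP : (0:ℝ) ≤ e ⬝ᵥ e := by
    simpa [dotProduct] using Finset.sum_nonneg fun j _ => mul_self_nonneg (e j)
  have hR : (0:ℝ) ≤ d ⬝ᵥ e := by simpa [he_def] using hK.dotProduct_mulVec_nonneg d
  have hS : (0:ℝ) ≤ α ⬝ᵥ (K *ᵥ α) := by simpa using hK.dotProduct_mulVec_nonneg α
  -- expand hβ
  have hβ' : α ⬝ᵥ (K *ᵥ α) + 2 * (α ⬝ᵥ e) + d ⬝ᵥ e ≤ B := by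
    have : β ⬝ᵥ (K *ᵥ β)
        = α ⬝ᵥ (K *ᵥ α) + 2 * (α ⬝ᵥ e) + d ⬝ᵥ e := by
      rw [hbeta]
      simp only [mulVec_add, dotProduct_add, add_dotProduct, ← he_def]
      rw [hKsym d α]
      ring
    linarith [this ▸ hβ]
  -- key quadratic inequality
  have key : (K *ᵥ α - Y) ⬝ᵥ (K *ᵥ α - Y) ≤ (K *ᵥ β - Y) ⬝ᵥ (K *ᵥ β - Y) + c * B := by
    have h1 : K *ᵥ α - Y = -(c • α) := by rw [hY]; abel
    have h2 : K *ᵥ β - Y = e - c • α := by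
      rw [hbeta, mulVec_add, ← he_def, hY]; abel
    rw [h1, h2]
    have e1 : (-(c • α)) ⬝ᵥ (-(c • α)) = c ^ 2 * (α ⬝ᵥ α) := by
      simp [dotProduct_smul, smul_dotProduct, smul_eq_mul, dotProduct_neg, neg_dotProduct]
      ring
    have e2 : (e - c • α) ⬝ᵥ (e - c • α)
        = e ⬝ᵥ e - 2 * c * (α ⬝ᵥ e) + c ^ 2 * (α ⬝ᵥ α) := by
      simp only [dotProduct_sub, sub_dotProduct, dotProduct_smul, smul_dotProduct,
        smul_eq_mul]
      rw [dotProduct_comm e α]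
      ring
    rw [e1, e2]
    nlinarith
  -- conclude
  rw [l2norm_eq_sqrt_dot, l2norm_eq_sqrt_dot]
  have hdd : (0:ℝ) ≤ (K *ᵥ β - Y) ⬝ᵥ (K *ᵥ β - Y) := by
    simpa [dotProduct] using Finset.sum_nonneg fun j _ => mul_self_nonneg ((K *ᵥ β - Y) j)
  calc Real.sqrt ((K *ᵥ α - Y) ⬝ᵥ (K *ᵥ α - Y))
      ≤ Real.sqrt ((K *ᵥ β - Y) ⬝ᵥ (K *ᵥ β - Y) + c * B) := Real.sqrt_le_sqrt key
    _ ≤ Real.sqrt ((K *ᵥ β - Y) ⬝ᵥ (K *ᵥ β - Y)) + Real.sqrt (c * B) :=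
        sqrt_add_le' hdd (by positivity)
end

section
/- Let m be a positive integer, B > 0, and 0 < ε ≤ 3. Set λ = ε²/(81B), and let 0 < η ≤ ε³/(729B) and 0 < γ ≤ ε³/(729B). Let K be a real symmetric positive semidefinite m×m matrix, K_γ = K + γmI, and let K̄_γ be a real symmetric positive semidefinite m×m matrix with K̄_γ ⪯ K_γ ⪯ K̄_γ + ηmI. Let Y ∈ ℝ^m with all entries in [0,1], set ᾱ_γ = (K̄_γ + λmI)⁻¹ Y, and let α_B ∈ ℝ^m be any vector with α_BᵀK α_B ≤ B and ‖K α_B − Y‖₂ ≤ √m. Then (1/m)‖K̄_γ ᾱ_γ − Y‖₂² ≤ (1/m)‖K α_B − Y‖₂² + ε. -/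
open Matrix

lemma le_of_sq_le' {a b : ℝ} (h : a ^ 2 ≤ b ^ 2) (hb : 0 ≤ b) : a ≤ b := by
  nlinarith [sq_nonneg (a - b), sq_nonneg (a + b)]

lemma dot_self_nonneg' {m : ℕ} (v : Fin m → ℝ) : 0 ≤ v ⬝ᵥ v :=
  Finset.sum_nonneg fun _ _ => mul_self_nonneg _

lemma psd_dot {m : ℕ} {A : Matrix (Fin m) (Fin m) ℝ} (hA : A.PosSemidef)
    (x : Fin m → ℝ) : 0 ≤ x ⬝ᵥ (A *ᵥ x) := by
  simpa using hA.dotProduct_mulVec_nonneg x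

lemma sym_dot {m : ℕ} {A : Matrix (Fin m) (Fin m) ℝ} (hA : A.IsHermitian)
    (x y : Fin m → ℝ) : x ⬝ᵥ (A *ᵥ y) = y ⬝ᵥ (A *ᵥ x) := by
  rw [Matrix.dotProduct_mulVec, ← Matrix.mulVec_transpose]
  have h : Aᵀ = A := by
    have := hA; rwa [Matrix.IsHermitian, conjTranspose_eq_transpose_of_trivial] at this
  rw [h, dotProduct_comm]

lemma l2norm_sq {m : ℕ} (v : Fin m → ℝ) : l2norm v ^ 2 = v ⬝ᵥ v := by
  rw [l2norm, Real.sq_sqrt (Finset.sum_nonneg fun i _ => sq_nonneg _)]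
  simp [dotProduct, sq]

lemma dot_le_l2 {m : ℕ} (a b : Fin m → ℝ) : a ⬝ᵥ b ≤ l2norm a * l2norm b := by
  apply le_of_sq_le' _ (mul_nonneg (l2norm_nonneg a) (l2norm_nonneg b))
  rw [mul_pow, l2norm_sq, l2norm_sq]
  have := Finset.sum_mul_sq_le_sq_mul_sq Finset.univ a b
  simpa [dotProduct, sq] using this

lemma l2norm_triangle {m : ℕ} (a b : Fin m → ℝ) :
    l2norm (a + b) ≤ l2norm a + l2norm b := by
  apply le_of_sq_le' _ (add_nonneg (l2norm_nonneg a) (l2norm_nonneg b))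
  rw [l2norm_sq]
  have h1 : (a + b) ⬝ᵥ (a + b) = a ⬝ᵥ a + 2 * (a ⬝ᵥ b) + b ⬝ᵥ b := by
    simp [dotProduct_add, add_dotProduct, dotProduct_comm b a]; ring
  rw [h1]
  have := dot_le_l2 a b
  have ha := l2norm_sq a; have hb := l2norm_sq b
  nlinarith [l2norm_nonneg a, l2norm_nonneg b]

/-- If K w + t w = K α with K PSD, then wᵀKw + 2t‖w‖² ≤ αᵀKα. -/
lemma ridge_shrink {m : ℕ} {K : Matrix (Fin m) (Fin m) ℝ} (hK : K.PosSemidef)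
    {t : ℝ} (α w : Fin m → ℝ) (hw : K *ᵥ w + t • w = K *ᵥ α) :
    w ⬝ᵥ (K *ᵥ w) + 2 * t * (w ⬝ᵥ w) ≤ α ⬝ᵥ (K *ᵥ α) := by
  set d : Fin m → ℝ := α - w with hd
  have hda : α = w + d := by simp [hd]
  have hKd : K *ᵥ d = t • w := by
    rw [hd, Matrix.mulVec_sub]
    rw [← hw]; abel
  have hexp : α ⬝ᵥ (K *ᵥ α) =
      w ⬝ᵥ (K *ᵥ w) + w ⬝ᵥ (K *ᵥ d) + d ⬝ᵥ (K *ᵥ w) + d ⬝ᵥ (K *ᵥ d) := by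
    rw [hda, Matrix.mulVec_add]
    simp [dotProduct_add, add_dotProduct]; ring
  have hsym : d ⬝ᵥ (K *ᵥ w) = w ⬝ᵥ (K *ᵥ d) := sym_dot hK.1 d w
  have h1 : w ⬝ᵥ (K *ᵥ d) = t * (w ⬝ᵥ w) := by rw [hKd, dotProduct_smul]; simp
  have h2 : 0 ≤ d ⬝ᵥ (K *ᵥ d) := psd_dot hK d
  rw [hexp, hsym, h1]; linarith

/-- Optimality of the ridge solution. -/
lemma ridge_opt {m : ℕ} {A : Matrix (Fin m) (Fin m) ℝ} (hA : A.PosSemidef)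
    {t : ℝ} (ht : 0 ≤ t) (Y a x : Fin m → ℝ) (ha : A *ᵥ a + t • a = Y) :
    (A *ᵥ a - Y) ⬝ᵥ (A *ᵥ a - Y) + t * (a ⬝ᵥ (A *ᵥ a)) ≤
      (A *ᵥ x - Y) ⬝ᵥ (A *ᵥ x - Y) + t * (x ⬝ᵥ (A *ᵥ x)) := by
  set d : Fin m → ℝ := x - a with hd
  have hxa : x = a + d := by simp [hd]
  have hYa : A *ᵥ a - Y = -(t • a) := by rw [← ha]; abel
  have h1 : A *ᵥ x - Y = A *ᵥ d - t • a := by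
    rw [hxa, Matrix.mulVec_add, ← ha]; abel
  have hsym1 : d ⬝ᵥ (A *ᵥ a) = a ⬝ᵥ (A *ᵥ d) := sym_dot hA.1 d a
  have h2 : 0 ≤ (A *ᵥ d) ⬝ᵥ (A *ᵥ d) := dot_self_nonneg' _
  have h3 : 0 ≤ d ⬝ᵥ (A *ᵥ d) := psd_dot hA d
  have hexpL : (A *ᵥ a - Y) ⬝ᵥ (A *ᵥ a - Y) = t * t * (a ⬝ᵥ a) := by
    rw [hYa]; simp [dotProduct_smul, smul_dotProduct]; ring
  have hexpR : (A *ᵥ x - Y) ⬝ᵥ (A *ᵥ x - Y) =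
      (A *ᵥ d) ⬝ᵥ (A *ᵥ d) - 2 * (t * (a ⬝ᵥ (A *ᵥ d))) + t * t * (a ⬝ᵥ a) := by
    rw [h1]
    simp only [dotProduct_sub, sub_dotProduct, dotProduct_smul, smul_dotProduct,
      smul_eq_mul]
    rw [dotProduct_comm (A *ᵥ d) a]
    ring
  have hexpx : x ⬝ᵥ (A *ᵥ x) = a ⬝ᵥ (A *ᵥ a) + 2 * (a ⬝ᵥ (A *ᵥ d)) + d ⬝ᵥ (A *ᵥ d) := by
    rw [hxa, Matrix.mulVec_add]
    simp only [dotProduct_add, add_dotProduct]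
    rw [hsym1]; ring
  rw [hexpL, hexpR, hexpx]
  nlinarith [mul_nonneg ht h3]

open scoped MatrixOrder in
/-- For 0 ⪯ E ⪯ cI, ‖Ex‖² ≤ c²‖x‖². -/
lemma ebound {m : ℕ} {E : Matrix (Fin m) (Fin m) ℝ} (hE : E.PosSemidef) {c : ℝ}
    (hc0 : 0 ≤ c) (hc : (c • (1 : Matrix (Fin m) (Fin m) ℝ) - E).PosSemidef)
    (x : Fin m → ℝ) : (E *ᵥ x) ⬝ᵥ (E *ᵥ x) ≤ c ^ 2 * (x ⬝ᵥ x) := by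
  set s := CFC.sqrt E with hsdef
  have hs : s * s = E := CFC.sqrt_mul_sqrt_self E hE.nonneg
  have hsym : s.IsHermitian := (CFC.sqrt_nonneg E).posSemidef.1
  set z : Fin m → ℝ := s *ᵥ x with hz
  have smulvec : ∀ v : Fin m → ℝ, (c • (1 : Matrix (Fin m) (Fin m) ℝ)) *ᵥ v = c • v := by
    intro v; rw [Matrix.smul_mulVec, Matrix.one_mulVec]
  have hzz : z ⬝ᵥ z = x ⬝ᵥ (E *ᵥ x) := by
    rw [hz, sym_dot hsym (s *ᵥ x) x, Matrix.mulVec_mulVec, hs]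
  have hzEz : z ⬝ᵥ (E *ᵥ z) = (E *ᵥ x) ⬝ᵥ (E *ᵥ x) := by
    rw [hz, dotProduct_comm, ← sym_dot hsym x (E *ᵥ (s *ᵥ x)), Matrix.mulVec_mulVec,
      Matrix.mulVec_mulVec]
    have h : s * E * s = E * E := by rw [← hs]; noncomm_ring
    rw [h, ← Matrix.mulVec_mulVec, sym_dot hE.1 x (E *ᵥ x)]
  have h1 : 0 ≤ c * (z ⬝ᵥ z) - z ⬝ᵥ (E *ᵥ z) := by
    have := psd_dot hc z
    rwa [Matrix.sub_mulVec, dotProduct_sub, smulvec, dotProduct_smul, smul_eq_mul] at this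
  have h2 : x ⬝ᵥ (E *ᵥ x) ≤ c * (x ⬝ᵥ x) := by
    have := psd_dot hc x
    rw [Matrix.sub_mulVec, dotProduct_sub, smulvec, dotProduct_smul, smul_eq_mul] at this
    linarith
  rw [hzz, hzEz] at h1
  nlinarith [psd_dot hE x]

lemma shifted_posdef {m : ℕ} {A : Matrix (Fin m) (Fin m) ℝ} (hA : A.PosSemidef)
    {t : ℝ} (ht : 0 < t) : (A + t • (1 : Matrix (Fin m) (Fin m) ℝ)).PosDef := by
  apply Matrix.PosDef.of_dotProduct_mulVec_pos
  · exact hA.1.add (by simp [Matrix.IsHermitian])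
  · intro x hx
    have h1 : 0 ≤ x ⬝ᵥ (A *ᵥ x) := psd_dot hA x
    have h2 : 0 < x ⬝ᵥ x := by
      rcases lt_or_eq_of_le (dot_self_nonneg' x) with h | h
      · exact h
      · exact absurd (dotProduct_self_eq_zero.mp h.symm) hx
    have : (A + t • 1) *ᵥ x = A *ᵥ x + t • x := by
      rw [Matrix.add_mulVec, Matrix.smul_mulVec, Matrix.one_mulVec]
    rw [this]
    simp only [star_trivial, dotProduct_add, dotProduct_smul, smul_eq_mul]
    nlinarith

lemma posdef_solves {m : ℕ} {M : Matrix (Fin m) (Fin m) ℝ} (hM : M.PosDef)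
    (Y : Fin m → ℝ) : M *ᵥ (M⁻¹ *ᵥ Y) = Y := by
  rw [Matrix.mulVec_mulVec, Matrix.mul_nonsing_inv _ ((Matrix.isUnit_iff_isUnit_det M).mp hM.isUnit),
    Matrix.one_mulVec]

set_option maxHeartbeats 1000000 in
lemma total_arith (mr B ε t g h R W P L2 : ℝ)
    (hmr : 1 ≤ mr) (hB : 0 < B) (hε0 : 0 < ε) (hε3 : ε ≤ 3)
    (ht : 81 * B * t = ε ^ 2 * mr) (ht0 : 0 < t)
    (hg0 : 0 ≤ g) (hg : 729 * B * g ≤ ε ^ 3 * mr)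
    (hh0 : 0 ≤ h) (hh : 729 * B * h ≤ ε ^ 3 * mr)
    (hR0 : 0 ≤ R) (hR2 : R ^ 2 ≤ mr)
    (hW0 : 0 ≤ W) (hW2 : 2 * t * W ^ 2 ≤ B)
    (hP0 : 0 ≤ P) (hPB : P ≤ B)
    (hL : L2 ≤ (R + (g + t + h) * W) ^ 2 + t * P + g * t * W ^ 2) :
    L2 ≤ R ^ 2 + ε * mr := by
  have hmr0 : 0 < mr := lt_of_lt_of_le one_pos hmr
  have hBt : 0 < B * t := mul_pos hB ht0
  have hcube : ε ^ 3 * mr ≤ 243 * (B * t) := by nlinarith [mul_pos (mul_pos hε0 hε0) hmr0]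
  have hgt : 3 * g ≤ t := by nlinarith
  have hht : 3 * h ≤ t := by nlinarith
  have hc0 : 0 ≤ g + t + h := by positivity
  have hc5 : 3 * (g + t + h) ≤ 5 * t := by linarith
  have hW20 : 0 ≤ W ^ 2 := sq_nonneg W
  have htW : t ^ 2 * W ^ 2 ≤ t * B / 2 := by nlinarith [mul_le_mul_of_nonneg_left hW2 (le_of_lt ht0)]
  have h9 : 9 * (g + t + h) ^ 2 ≤ 25 * t ^ 2 := by nlinarith
  have hprod : 0 ≤ (25 * t ^ 2 - 9 * (g + t + h) ^ 2) * W ^ 2 :=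
    mul_nonneg (by linarith) hW20
  have hS2 : 18 * ((g + t + h) * W) ^ 2 ≤ 50 * (t ^ 2 * W ^ 2) := by nlinarith [hprod]
  have htB : t * B ≤ 3 / 81 * (ε * mr) := by nlinarith [mul_pos hε0 hmr0]
  have hS2' : ((g + t + h) * W) ^ 2 ≤ 25 / 1458 * (ε ^ 2 * mr) := by nlinarith
  have hS0 : 0 ≤ (g + t + h) * W := mul_nonneg hc0 hW0
  have hcross : 2 * R * ((g + t + h) * W) ≤ 5 / 19 * (ε * mr) := by
    apply le_of_sq_le' _ (by positivity)
    have hRS : (2 * R * ((g + t + h) * W)) ^ 2 ≤ 4 * mr * (25 / 1458 * (ε ^ 2 * mr)) := by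
      nlinarith [mul_le_mul hR2 hS2' (sq_nonneg ((g + t + h) * W)) (le_of_lt hmr0),
        sq_nonneg ((g + t + h) * W)]
    have h2 : 4 * mr * (25 / 1458 * (ε ^ 2 * mr)) ≤ (5 / 19 * (ε * mr)) ^ 2 := by
      nlinarith [sq_nonneg (ε * mr), mul_pos hε0 hmr0, mul_pos (mul_pos hε0 hε0) hmr0]
    linarith
  have htP : t * P ≤ 1 / 27 * (ε * mr) := by nlinarith
  have hgtW : g * t * W ^ 2 ≤ 1 / 162 * (ε * mr) := by nlinarith [mul_le_mul_of_nonneg_left hW2 hg0]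
  have hS2'' : ((g + t + h) * W) ^ 2 ≤ 75 / 1458 * (ε * mr) := by nlinarith
  have hexp : (R + (g + t + h) * W) ^ 2 =
      R ^ 2 + 2 * R * ((g + t + h) * W) + ((g + t + h) * W) ^ 2 := by ring
  rw [hexp] at hL
  linarith [mul_pos hε0 hmr0]

set_option maxHeartbeats 1000000 in
/-- Total Error theorem (Theorem 8). -/
theorem total_error {m : ℕ} (hm : 0 < m) (B ε : ℝ) (hB : 0 < B)
    (hε0 : 0 < ε) (hε3 : ε ≤ 3)
    (lam η γ : ℝ) (hlam : lam = ε ^ 2 / (81 * B))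
    (hη0 : 0 < η) (hη : η ≤ ε ^ 3 / (729 * B))
    (hγ0 : 0 < γ) (hγ : γ ≤ ε ^ 3 / (729 * B))
    (K : Matrix (Fin m) (Fin m) ℝ) (hK : K.PosSemidef)
    (Kγ : Matrix (Fin m) (Fin m) ℝ) (hKγ : Kγ = K + (γ * m) • 1)
    (Kbar : Matrix (Fin m) (Fin m) ℝ) (hKbar : Kbar.PosSemidef)
    (hsand1 : (Kγ - Kbar).PosSemidef)
    (hsand2 : (Kbar + (η * m) • 1 - Kγ).PosSemidef)
    (Y : Fin m → ℝ) (hY : ∀ i, Y i ∈ Set.Icc (0 : ℝ) 1)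
    (αbarγ : Fin m → ℝ) (hαbarγ : αbarγ = (Kbar + (lam * m) • 1)⁻¹ *ᵥ Y)
    (αB : Fin m → ℝ) (hαB : αB ⬝ᵥ (K *ᵥ αB) ≤ B)
    (hloss : l2norm (K *ᵥ αB - Y) ≤ Real.sqrt m) :
    (1 / m) * l2norm (Kbar *ᵥ αbarγ - Y) ^ 2 ≤
      (1 / m) * l2norm (K *ᵥ αB - Y) ^ 2 + ε := by
  have hmr : (1 : ℝ) ≤ (m : ℝ) := by exact_mod_cast hm
  have hmr0 : (0 : ℝ) < (m : ℝ) := by exact_mod_cast hm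
  have hlam0 : 0 < lam := by rw [hlam]; positivity
  have ht0 : 0 < lam * (m : ℝ) := by positivity
  set t : ℝ := lam * (m : ℝ) with htdef
  -- the ridge solution solves its linear system
  have hMpd : (Kbar + t • (1 : Matrix (Fin m) (Fin m) ℝ)).PosDef := shifted_posdef hKbar ht0
  have hMY : (Kbar + t • (1 : Matrix (Fin m) (Fin m) ℝ)) *ᵥ αbarγ = Y := by
    rw [hαbarγ]; exact posdef_solves hMpd Y
  have ha : Kbar *ᵥ αbarγ + t • αbarγ = Y := by
    rw [← hMY, Matrix.add_mulVec, Matrix.smul_mulVec, Matrix.one_mulVec]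
  -- the smoothed comparator w
  have hNpd : (K + t • (1 : Matrix (Fin m) (Fin m) ℝ)).PosDef := shifted_posdef hK ht0
  set w : Fin m → ℝ := (K + t • (1 : Matrix (Fin m) (Fin m) ℝ))⁻¹ *ᵥ (K *ᵥ αB) with hwdef
  have hNw : (K + t • (1 : Matrix (Fin m) (Fin m) ℝ)) *ᵥ w = K *ᵥ αB := posdef_solves hNpd _
  have hw : K *ᵥ w + t • w = K *ᵥ αB := by
    rw [← hNw, Matrix.add_mulVec, Matrix.smul_mulVec, Matrix.one_mulVec]
  -- the sparsification error matrix E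
  set E : Matrix (Fin m) (Fin m) ℝ := K + (γ * (m : ℝ)) • 1 - Kbar with hEdef
  have hE : E.PosSemidef := by
    have h : E = Kγ - Kbar := by rw [hEdef, hKγ]
    rw [h]; exact hsand1
  have hcE : ((η * (m : ℝ)) • (1 : Matrix (Fin m) (Fin m) ℝ) - E).PosSemidef := by
    have h : (η * (m : ℝ)) • (1 : Matrix (Fin m) (Fin m) ℝ) - E = Kbar + (η * m) • 1 - Kγ := by
      rw [hEdef, hKγ]; abel
    rw [h]; exact hsand2
  have hKbar_eq : Kbar = K + (γ * (m : ℝ)) • 1 - E := by rw [hEdef]; abel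
  -- scalars
  set R : ℝ := l2norm (K *ᵥ αB - Y) with hRdef
  set W : ℝ := l2norm w with hWdef
  set P : ℝ := w ⬝ᵥ (K *ᵥ w) with hPdef
  have hW0 : 0 ≤ W := l2norm_nonneg w
  have hww : w ⬝ᵥ w = W ^ 2 := (l2norm_sq w).symm
  have hγm0 : 0 ≤ γ * (m : ℝ) := by positivity
  have hηm0 : 0 ≤ η * (m : ℝ) := by positivity
  -- decomposition of Kbar w - Y
  have hKw : K *ᵥ w = K *ᵥ αB - t • w := by rw [← hw]; abel
  have hKbarw : Kbar *ᵥ w = K *ᵥ αB - t • w + (γ * (m : ℝ)) • w - E *ᵥ w := by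
    rw [hKbar_eq, Matrix.sub_mulVec, Matrix.add_mulVec, Matrix.smul_mulVec,
      Matrix.one_mulVec, hKw]
  have hdecomp : Kbar *ᵥ w - Y = (K *ᵥ αB - Y) + ((γ * (m : ℝ) - t) • w + -(E *ᵥ w)) := by
    rw [hKbarw, sub_smul]; abel
  -- norm bounds
  have hEw : l2norm (E *ᵥ w) ≤ η * (m : ℝ) * W := by
    apply le_of_sq_le' _ (by positivity)
    rw [l2norm_sq]
    calc (E *ᵥ w) ⬝ᵥ (E *ᵥ w) ≤ (η * (m : ℝ)) ^ 2 * (w ⬝ᵥ w) := ebound hE hηm0 hcE w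
      _ = (η * (m : ℝ) * W) ^ 2 := by rw [hww]; ring
  have hnegEw : l2norm (-(E *ᵥ w)) = l2norm (E *ᵥ w) := by
    rw [← neg_one_smul ℝ (E *ᵥ w), l2norm_smul]; simp
  have hsmw : l2norm ((γ * (m : ℝ) - t) • w) ≤ (γ * (m : ℝ) + t) * W := by
    rw [l2norm_smul]
    have : |γ * (m : ℝ) - t| ≤ γ * (m : ℝ) + t :=
      abs_le.mpr ⟨by linarith, by linarith [ht0.le]⟩
    exact mul_le_mul_of_nonneg_right this hW0
  have hR0 : 0 ≤ R := l2norm_nonneg _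
  have htri : l2norm (Kbar *ᵥ w - Y) ≤ R + (γ * (m : ℝ) + t + η * (m : ℝ)) * W := by
    rw [hdecomp]
    have h1 := l2norm_triangle (K *ᵥ αB - Y) ((γ * (m : ℝ) - t) • w + -(E *ᵥ w))
    have h2 := l2norm_triangle ((γ * (m : ℝ) - t) • w) (-(E *ᵥ w))
    rw [hnegEw] at h2
    have := hEw
    nlinarith [hsmw]
  -- the ridge optimality chain
  have hopt := ridge_opt hKbar ht0.le Y αbarγ w ha
  have hL2 : l2norm (Kbar *ᵥ αbarγ - Y) ^ 2 ≤
      (Kbar *ᵥ w - Y) ⬝ᵥ (Kbar *ᵥ w - Y) + t * (w ⬝ᵥ (Kbar *ᵥ w)) := by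
    rw [l2norm_sq]
    have h0 : 0 ≤ t * (αbarγ ⬝ᵥ (Kbar *ᵥ αbarγ)) := mul_nonneg ht0.le (psd_dot hKbar _)
    linarith
  have hwKbarw : w ⬝ᵥ (Kbar *ᵥ w) ≤ P + (γ * (m : ℝ)) * W ^ 2 := by
    have heq : w ⬝ᵥ (Kbar *ᵥ w) = P + (γ * (m : ℝ)) * (w ⬝ᵥ w) - w ⬝ᵥ (E *ᵥ w) := by
      rw [hKbar_eq, Matrix.sub_mulVec, Matrix.add_mulVec, Matrix.smul_mulVec,
        Matrix.one_mulVec]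
      simp [dotProduct_sub, dotProduct_add, dotProduct_smul, hPdef]
    rw [heq, hww]
    linarith [psd_dot hE w]
  have hsq : (Kbar *ᵥ w - Y) ⬝ᵥ (Kbar *ᵥ w - Y) ≤
      (R + (γ * (m : ℝ) + t + η * (m : ℝ)) * W) ^ 2 := by
    rw [← l2norm_sq]
    exact pow_le_pow_left₀ (l2norm_nonneg _) htri 2
  -- shrinkage bounds
  have hshrink := ridge_shrink hK αB w hw
  rw [hww] at hshrink
  have hP0 : 0 ≤ P := psd_dot hK w
  have hW2 : 2 * t * W ^ 2 ≤ B := by nlinarith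
  have hPB : P ≤ B := by nlinarith [sq_nonneg W, ht0.le, mul_nonneg (mul_nonneg (by norm_num : (0:ℝ) ≤ 2) ht0.le) (sq_nonneg W)]
  -- assemble
  have hRm : R ^ 2 ≤ (m : ℝ) := by
    have h := pow_le_pow_left₀ hR0 hloss 2
    rwa [Real.sq_sqrt hmr0.le] at h
  have hL : l2norm (Kbar *ᵥ αbarγ - Y) ^ 2 ≤
      (R + (γ * (m : ℝ) + t + η * (m : ℝ)) * W) ^ 2 + t * P + (γ * (m : ℝ)) * t * W ^ 2 := by
    have h3 : t * (w ⬝ᵥ (Kbar *ᵥ w)) ≤ t * (P + (γ * (m : ℝ)) * W ^ 2) :=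
      mul_le_mul_of_nonneg_left hwKbarw ht0.le
    nlinarith
  have hteq : 81 * B * t = ε ^ 2 * (m : ℝ) := by
    rw [htdef, hlam]; field_simp
  have hgB : 729 * B * (γ * (m : ℝ)) ≤ ε ^ 3 * (m : ℝ) := by
    have h1 : γ * (m : ℝ) ≤ ε ^ 3 / (729 * B) * (m : ℝ) :=
      mul_le_mul_of_nonneg_right hγ hmr0.le
    have h2 : 729 * B * (ε ^ 3 / (729 * B) * (m : ℝ)) = ε ^ 3 * (m : ℝ) := by
      field_simp
    nlinarith
  have hhB : 729 * B * (η * (m : ℝ)) ≤ ε ^ 3 * (m : ℝ) := by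
    have h1 : η * (m : ℝ) ≤ ε ^ 3 / (729 * B) * (m : ℝ) :=
      mul_le_mul_of_nonneg_right hη hmr0.le
    have h2 : 729 * B * (ε ^ 3 / (729 * B) * (m : ℝ)) = ε ^ 3 * (m : ℝ) := by
      field_simp
    nlinarith
  have harith := total_arith (m : ℝ) B ε t (γ * (m : ℝ)) (η * (m : ℝ)) R W P
    (l2norm (Kbar *ᵥ αbarγ - Y) ^ 2) hmr hB hε0 hε3 hteq ht0 hγm0 hgB hηm0 hhB
    hR0 hRm hW0 hW2 hP0 hPB hL
  have hfin1 : (1 / (m : ℝ)) * l2norm (Kbar *ᵥ αbarγ - Y) ^ 2 ≤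
      (1 / (m : ℝ)) * (R ^ 2 + ε * (m : ℝ)) :=
    mul_le_mul_of_nonneg_left harith (by positivity)
  have hfin2 : (1 / (m : ℝ)) * (R ^ 2 + ε * (m : ℝ)) = (1 / (m : ℝ)) * R ^ 2 + ε := by
    field_simp
  linarith
end

section
/- Let m be a positive integer, K a real symmetric positive semidefinite m×m matrix with eigenvalues λ₁ ≥ λ₂ ≥ … ≥ λ_m (counted with multiplicity), and let η > 0, γ ≥ 0 satisfy γm ≤ η. Set K_γ = K + γmI. Suppose there are constants C > 0 and p > 1 such that λ_i ≤ C m · i^{−p} for all i ∈ {1,…,m}. Then the η-effective dimension satisfies tr(K_γ (K_γ + ηmI)⁻¹) ≤ 2·(C/((p−1)η))^{1/p} + 2. -/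
open Matrix

/-- Spectral (operator 2-) norm of a real square matrix. -/
noncomputable def spectralNorm₂ {m : ℕ} (A : Matrix (Fin m) (Fin m) ℝ) : ℝ :=
  ‖Matrix.toEuclideanCLM (𝕜 := ℝ) A‖

private lemma aux_mvt_step {p : ℝ} (hp : 1 < p) (n : ℕ) (hn : 1 ≤ n) :
    (p - 1) * ((n : ℝ) + 1) ^ (-p) ≤ (n : ℝ) ^ (1 - p) - ((n : ℝ) + 1) ^ (1 - p) := by
  have hn0 : (1 : ℝ) ≤ (n : ℝ) := by exact_mod_cast hn
  have hlt : (n : ℝ) < (n : ℝ) + 1 := by linarith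
  have hcont : ContinuousOn (fun x : ℝ => x ^ (1 - p)) (Set.Icc (n : ℝ) ((n : ℝ) + 1)) := by
    apply ContinuousOn.rpow_const continuousOn_id
    intro x hx
    exact Or.inl (show x ≠ 0 from fun h => by rw [h] at hx; have := hx.1; linarith)
  have hderiv : ∀ x ∈ Set.Ioo (n : ℝ) ((n : ℝ) + 1),
      HasDerivAt (fun x : ℝ => x ^ (1 - p)) ((1 - p) * x ^ (-p)) x := by
    intro x hx
    have hx0 : x ≠ 0 := by have := hx.1; intro h; rw [h] at this; linarith
    have := Real.hasDerivAt_rpow_const (x := x) (p := 1 - p) (Or.inl hx0)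
    simpa [sub_sub_cancel_left, show 1 - p - 1 = -p by ring] using this
  obtain ⟨c, hc, hceq⟩ := exists_hasDerivAt_eq_slope (fun x : ℝ => x ^ (1 - p))
    (fun x => (1 - p) * x ^ (-p)) hlt hcont hderiv
  have hden : (n : ℝ) + 1 - (n : ℝ) = 1 := by ring
  rw [hden, div_one] at hceq
  have hcpos : 0 < c := by have := hc.1; linarith
  have hcle : c ≤ (n : ℝ) + 1 := le_of_lt hc.2
  have hmono : ((n : ℝ) + 1) ^ (-p) ≤ c ^ (-p) :=
    Real.rpow_le_rpow_of_nonpos hcpos hcle (by linarith)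
  have h1p : 1 - p < 0 := by linarith
  nlinarith [hceq, hmono]

private lemma aux_tail_sum {p : ℝ} (hp : 1 < p) (n : ℕ) (hn : 1 ≤ n) (m : ℕ) :
    ∑ i ∈ Finset.Ico n m, ((i : ℝ) + 1) ^ (-p) ≤ (n : ℝ) ^ (1 - p) / (p - 1) := by
  have hp1 : (0 : ℝ) < p - 1 := by linarith
  rcases le_or_gt m n with h | h
  · rw [Finset.Ico_eq_empty_of_le h, Finset.sum_empty]
    positivity
  · have key : ∀ M, n ≤ M → ∑ i ∈ Finset.Ico n M, ((i : ℝ) + 1) ^ (-p) ≤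
        ((n : ℝ) ^ (1 - p) - (M : ℝ) ^ (1 - p)) / (p - 1) := by
      intro M hM
      induction M, hM using Nat.le_induction with
      | base => simp
      | succ M hM ih =>
        rw [Finset.sum_Ico_succ_top hM]
        have hM1 : 1 ≤ M := le_trans hn hM
        have := aux_mvt_step hp M hM1
        have hstep : ((M : ℝ) + 1) ^ (-p) ≤
            ((M : ℝ) ^ (1 - p) - ((M : ℝ) + 1) ^ (1 - p)) / (p - 1) := by
          rw [le_div_iff₀ hp1]; linarith
        have hcomb : ((n:ℝ) ^ (1-p) - (M:ℝ) ^ (1-p))/(p-1) + ((M:ℝ)^(1-p) - ((M:ℝ)+1)^(1-p))/(p-1)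
            = ((n:ℝ)^(1-p) - ((M:ℝ)+1)^(1-p))/(p-1) := by ring
        push_cast
        push_cast at ih hstep hcomb
        linarith
    calc ∑ i ∈ Finset.Ico n m, ((i : ℝ) + 1) ^ (-p)
        ≤ ((n : ℝ) ^ (1 - p) - (m : ℝ) ^ (1 - p)) / (p - 1) := key m h.le
      _ ≤ (n : ℝ) ^ (1 - p) / (p - 1) := by
          refine (div_le_div_iff_of_pos_right hp1).mpr ?_
          have : (0:ℝ) ≤ (m:ℝ) ^ (1-p) := Real.rpow_nonneg (Nat.cast_nonneg m) _
          linarith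

private lemma aux_sum_min_le {C η p : ℝ} (hC : 0 < C) (hη : 0 < η) (hp : 1 < p) (m : ℕ) :
    ∑ i ∈ Finset.range m, min 1 (C / η * ((i : ℝ) + 1) ^ (-p)) ≤
      2 * (C / ((p - 1) * η)) ^ (1 / p) + 1 := by
  set b : ℝ := (C / ((p - 1) * η)) ^ (1 / p) with hb
  have hp1 : (0 : ℝ) < p - 1 := by linarith
  have hbpos : 0 < b := by positivity
  have hbp : b ^ p = C / ((p - 1) * η) := by
    rw [hb, ← Real.rpow_mul (by positivity), one_div,
      inv_mul_cancel₀ (by positivity : p ≠ 0), Real.rpow_one]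
  set n : ℕ := min m ⌈b⌉₊ with hn
  have hnm : n ≤ m := min_le_left _ _
  have hnb : (n : ℝ) ≤ b + 1 := by
    calc (n : ℝ) ≤ (⌈b⌉₊ : ℝ) := by exact_mod_cast min_le_right m ⌈b⌉₊
      _ ≤ b + 1 := (Nat.ceil_lt_add_one hbpos.le).le
  have hsplit : Finset.range m = Finset.Ico 0 n ∪ Finset.Ico n m := by
    rw [Finset.range_eq_Ico, ← Finset.Ico_union_Ico_eq_Ico (Nat.zero_le n) hnm]
  rw [hsplit, Finset.sum_union (by
    apply Finset.Ico_disjoint_Ico_consecutive)]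
  have head : ∑ i ∈ Finset.Ico 0 n, min 1 (C / η * ((i : ℝ) + 1) ^ (-p)) ≤ b + 1 := by
    calc ∑ i ∈ Finset.Ico 0 n, min 1 (C / η * ((i : ℝ) + 1) ^ (-p))
        ≤ ∑ i ∈ Finset.Ico 0 n, 1 := Finset.sum_le_sum fun i _ => min_le_left _ _
      _ = (n : ℝ) := by simp
      _ ≤ b + 1 := hnb
  have tail : ∑ i ∈ Finset.Ico n m, min 1 (C / η * ((i : ℝ) + 1) ^ (-p)) ≤ b := by
    rcases lt_or_ge m ⌈b⌉₊ with h | h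
    · have : n = m := by omega
      rw [this, Finset.Ico_self, Finset.sum_empty]; exact hbpos.le
    · have hnc : n = ⌈b⌉₊ := by omega
      have hn1 : 1 ≤ n := by
        rw [hnc]; exact Nat.one_le_ceil_iff.mpr hbpos
      have hbn : b ≤ (n : ℝ) := by rw [hnc]; exact Nat.le_ceil b
      calc ∑ i ∈ Finset.Ico n m, min 1 (C / η * ((i : ℝ) + 1) ^ (-p))
          ≤ ∑ i ∈ Finset.Ico n m, C / η * ((i : ℝ) + 1) ^ (-p) :=
            Finset.sum_le_sum fun i _ => min_le_right _ _
        _ = C / η * ∑ i ∈ Finset.Ico n m, ((i : ℝ) + 1) ^ (-p) := by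
            rw [Finset.mul_sum]
        _ ≤ C / η * ((n : ℝ) ^ (1 - p) / (p - 1)) := by
            apply mul_le_mul_of_nonneg_left (aux_tail_sum hp n hn1 m) (by positivity)
        _ ≤ C / η * (b ^ (1 - p) / (p - 1)) := by
            apply mul_le_mul_of_nonneg_left ?_ (by positivity)
            refine (div_le_div_iff_of_pos_right hp1).mpr ?_
            exact Real.rpow_le_rpow_of_nonpos hbpos hbn (by linarith)
        _ = b := by
            have hCη : C / η = b ^ p * (p - 1) := by
              rw [hbp]; field_simp
            rw [hCη]
            have h2 : b ^ p * (p-1) * (b ^ (1-p) / (p-1)) = b ^ p * b ^ (1-p) := by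
              field_simp
            rw [h2, ← Real.rpow_add hbpos]
            norm_num
  linarith

/-- Effective dimension bound under polynomial eigenvalue decay (Theorem 9, part 1). -/
theorem effective_dimension_polynomial_decay {m : ℕ} (hm : 0 < m)
    (K : Matrix (Fin m) (Fin m) ℝ) (hK : K.PosSemidef)
    (η γ : ℝ) (hη : 0 < η) (hγ : 0 ≤ γ) (hγm : γ * m ≤ η)
    (Kγ : Matrix (Fin m) (Fin m) ℝ) (hKγ : Kγ = K + (γ * m) • 1)
    (lam : Fin m → ℝ) (hsort : Antitone lam)
    (hperm : ∃ σ : Equiv.Perm (Fin m), ∀ i, lam i = hK.1.eigenvalues (σ i))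
    (C p : ℝ) (hC : 0 < C) (hp : 1 < p)
    (hdecay : ∀ i : Fin m, lam i ≤ C * m * ((i : ℝ) + 1) ^ (-p)) :
    (Kγ * (Kγ + (η * m) • 1)⁻¹).trace ≤
      2 * (C / ((p - 1) * η)) ^ (1 / p) + 2 := by
  obtain ⟨σ, hσ⟩ := hperm
  have hmR : (0 : ℝ) < m := by exact_mod_cast hm
  set e := hK.1.eigenvalues with he
  set U : Matrix (Fin m) (Fin m) ℝ := (hK.1.eigenvectorUnitary : Matrix (Fin m) (Fin m) ℝ)
    with hUdef
  have hU1 : U * star U = 1 := (Matrix.mem_unitaryGroup_iff).mp hK.1.eigenvectorUnitary.2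
  have hU2 : star U * U = 1 := (Matrix.mem_unitaryGroup_iff').mp hK.1.eigenvectorUnitary.2
  have hKspec : K = U * Matrix.diagonal e * star U := by
    have := hK.1.spectral_theorem
    rwa [RCLike.ofReal_real_eq_id, Function.id_comp] at this
  have hepos : ∀ i, 0 < e i + γ * m + η * m := by
    intro i
    have h1 : 0 ≤ e i := hK.eigenvalues_nonneg i
    have : 0 ≤ γ * m := by positivity
    nlinarith
  set d : Fin m → ℝ := fun i => e i + γ * m with hd
  set d' : Fin m → ℝ := fun i => e i + γ * m + η * m with hd'
  have hconj : ∀ v : Fin m → ℝ, ∀ c : ℝ,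
      U * Matrix.diagonal v * star U + c • (1 : Matrix (Fin m) (Fin m) ℝ)
        = U * Matrix.diagonal (fun i => v i + c) * star U := by
    intro v c
    have : c • (1 : Matrix (Fin m) (Fin m) ℝ) = U * (c • 1) * star U := by
      rw [Matrix.mul_smul, Matrix.smul_mul, mul_one, hU1]
    rw [this, Matrix.smul_one_eq_diagonal, ← Matrix.add_mul, ← Matrix.mul_add,
      Matrix.diagonal_add]
  have hKγspec : Kγ = U * Matrix.diagonal d * star U := by
    rw [hKγ, hKspec, hconj]
  have hKγ'spec : Kγ + (η * m) • 1 = U * Matrix.diagonal d' * star U := by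
    rw [hKγspec, hconj]
  have hmulconj : ∀ v w : Fin m → ℝ,
      (U * Matrix.diagonal v * star U) * (U * Matrix.diagonal w * star U)
        = U * Matrix.diagonal (fun i => v i * w i) * star U := by
    intro v w
    have h1 : U * Matrix.diagonal v * star U * (U * Matrix.diagonal w * star U)
        = U * (Matrix.diagonal v * (star U * U * (Matrix.diagonal w * star U))) := by
      simp only [Matrix.mul_assoc]
    rw [h1, hU2, one_mul, ← Matrix.mul_assoc (Matrix.diagonal v),
      Matrix.diagonal_mul_diagonal, ← Matrix.mul_assoc]
  have honefun : (fun i => d' i * (d' i)⁻¹) = fun _ : Fin m => (1:ℝ) := by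
    funext i; exact mul_inv_cancel₀ (hepos i).ne'
  have hinv : (Kγ + (η * m) • 1)⁻¹ = U * Matrix.diagonal (fun i => (d' i)⁻¹) * star U := by
    apply Matrix.inv_eq_right_inv
    rw [hKγ'spec, hmulconj, honefun, Matrix.diagonal_one, mul_one, hU1]
  have htr : (Kγ * (Kγ + (η * m) • 1)⁻¹).trace = ∑ i, d i * (d' i)⁻¹ := by
    rw [hinv, hKγspec, hmulconj, Matrix.trace_mul_cycle, hU2, one_mul,
      Matrix.trace_diagonal]
  rw [htr]
  -- pass to the sorted eigenvalues
  set g : ℝ → ℝ := fun x => (x + γ * m) * (x + γ * m + η * m)⁻¹ with hg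
  have hsum1 : ∑ i, d i * (d' i)⁻¹ = ∑ i, g (lam i) := by
    rw [show ∑ i, d i * (d' i)⁻¹ = ∑ i, g (e i) from rfl, ← Equiv.sum_comp σ (fun i => g (e i))]
    exact Finset.sum_congr rfl fun i _ => by rw [hσ i]
  rw [hsum1]
  -- per-term bound
  have hterm : ∀ i : Fin m, g (lam i) ≤ min 1 (C / η * ((i : ℝ) + 1) ^ (-p)) + 1 / m := by
    intro i
    have hlam0 : 0 ≤ lam i := by rw [hσ i]; exact hK.eigenvalues_nonneg (σ i)
    set lm := lam i with hlm
    have hA : 0 < lm + γ * m + η * m := by nlinarith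
    have hgle : g lm = (lm + γ * m) / (lm + γ * m + η * m) := by
      rw [hg, div_eq_mul_inv]
    have h1 : g lm ≤ 1 := by
      rw [hgle, div_le_one hA]; nlinarith
    have hdec := hdecay i
    have h2 : g lm ≤ C / η * ((i : ℝ) + 1) ^ (-p) + 1 / m := by
      have hηm : (0:ℝ) < η * m := by positivity
      have ha : (lm + γ * m) / (lm + γ * m + η * m) ≤ (lm + γ * m) / (η * m) := by
        apply div_le_div_of_nonneg_left (by nlinarith) hηm (by nlinarith)
      have hb1 : (lm + γ * m) / (η * m) = lm / (η * m) + γ / η := by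
        field_simp
      have hc1 : lm / (η * m) ≤ C / η * ((i : ℝ) + 1) ^ (-p) := by
        rw [div_le_iff₀ hηm]
        have hpow : (0:ℝ) ≤ ((i : ℝ) + 1) ^ (-p) := Real.rpow_nonneg (by positivity) _
        calc lm ≤ C * m * ((i : ℝ) + 1) ^ (-p) := hdec
          _ = C / η * ((i : ℝ) + 1) ^ (-p) * (η * m) := by field_simp
      have hd1 : γ / η ≤ 1 / m := by
        rw [div_le_div_iff₀ hη hmR]; linarith
      rw [hgle]
      calc (lm + γ * m) / (lm + γ * m + η * m) ≤ lm / (η * m) + γ / η := by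
            rw [← hb1]; exact ha
        _ ≤ C / η * ((i : ℝ) + 1) ^ (-p) + 1 / m := add_le_add hc1 hd1
    rcases le_total 1 (C / η * ((i : ℝ) + 1) ^ (-p)) with h | h
    · rw [min_eq_left h]
      have : (0:ℝ) ≤ 1 / m := by positivity
      linarith
    · rw [min_eq_right h]
      exact h2
  calc ∑ i, g (lam i) ≤ ∑ i : Fin m, (min 1 (C / η * ((i : ℝ) + 1) ^ (-p)) + 1 / m) :=
        Finset.sum_le_sum fun i _ => hterm i
    _ = (∑ i : Fin m, min 1 (C / η * ((i : ℝ) + 1) ^ (-p))) + m * (1 / m) := by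
        rw [Finset.sum_add_distrib, Finset.sum_const, Finset.card_univ, Fintype.card_fin,
          nsmul_eq_mul]
    _ = (∑ i ∈ Finset.range m, min 1 (C / η * ((i : ℝ) + 1) ^ (-p))) + 1 := by
        rw [Fin.sum_univ_eq_sum_range (fun i : ℕ => min 1 (C / η * ((i : ℝ) + 1) ^ (-p))) m,
          mul_one_div, div_self hmR.ne']
    _ ≤ (2 * (C / ((p - 1) * η)) ^ (1 / p) + 1) + 1 := by
        have := aux_sum_min_le hC hη hp m
        linarith
    _ = 2 * (C / ((p - 1) * η)) ^ (1 / p) + 2 := by ring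
end

section
/- Let m be a positive integer, K a real symmetric positive semidefinite m×m matrix with eigenvalues λ₁ ≥ λ₂ ≥ … ≥ λ_m (counted with multiplicity), and let η > 0, γ ≥ 0 satisfy γm ≤ η. Set K_γ = K + γmI. Suppose there is a constant C > 0 with C ≥ (e−1)η such that λ_i ≤ C m · e^{−i} for all i ∈ {1,…,m}. Then the η-effective dimension satisfies tr(K_γ (K_γ + ηmI)⁻¹) ≤ log(C/((e−1)η)) + 3, where log denotes the natural logarithm. -/
open Matrix

/-- Spectral (operator 2-) norm of a real square matrix. -/
noncomputable def matSpectralNorm {m : ℕ} (A : Matrix (Fin m) (Fin m) ℝ) : ℝ :=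
  ‖Matrix.toEuclideanCLM (𝕜 := ℝ) A‖

lemma sum_bound {m : ℕ} (hm : 0 < m) (η γ C : ℝ) (hη : 0 < η) (hγ : 0 ≤ γ)
    (hγm : γ * m ≤ η) (hC : 0 < C) (hC' : (Real.exp 1 - 1) * η ≤ C)
    (lam : Fin m → ℝ) (hpos : ∀ i, 0 ≤ lam i)
    (hdecay : ∀ i : Fin m, lam i ≤ C * m * Real.exp (-((i : ℝ) + 1))) :
    ∑ i, (lam i + γ * m) / (lam i + γ * m + η * m) ≤
      Real.log (C / ((Real.exp 1 - 1) * η)) + 3 := by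
  have he1 : (1 : ℝ) < Real.exp 1 - 1 := by
    have := Real.add_one_le_exp 1
    nlinarith [Real.exp_one_gt_d9]
  have he0 : (0 : ℝ) < Real.exp 1 - 1 := by linarith
  set L := Real.log (C / ((Real.exp 1 - 1) * η)) with hLdef
  have hL0 : 0 ≤ L := by
    apply Real.log_nonneg
    rw [le_div_iff₀ (by positivity)]
    linarith
  set n₀ := ⌈L⌉₊ with hn₀
  have hmpos : (0 : ℝ) < m := by exact_mod_cast hm
  have hηm : (0 : ℝ) < η * m := by positivity
  -- pointwise bound
  have hpt : ∀ i : Fin m, (lam i + γ * m) / (lam i + γ * m + η * m) ≤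
      (if (i : ℕ) < n₀ then 1 else C / η * Real.exp (-((i : ℝ) + 1)) + 1 / m) := by
    intro i
    by_cases h : (i : ℕ) < n₀
    · simp only [h, if_true]
      rw [div_le_one (by nlinarith [hpos i])]
      nlinarith [hpos i]
    · simp only [h, if_false]
      have h1 : (lam i + γ * m) / (lam i + γ * m + η * m) ≤ (lam i + γ * m) / (η * m) := by
        apply div_le_div_of_nonneg_left (by nlinarith [hpos i]) hηm
        nlinarith [hpos i]
      refine h1.trans ?_
      have h2 : lam i + γ * m ≤ C * m * Real.exp (-((i : ℝ) + 1)) + η := by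
        have := hdecay i; linarith
      calc (lam i + γ * m) / (η * m) ≤ (C * m * Real.exp (-((i : ℝ) + 1)) + η) / (η * m) := by
            gcongr
        _ = C / η * Real.exp (-((i : ℝ) + 1)) + 1 / m := by
            field_simp
  refine le_trans (Finset.sum_le_sum (fun i (_ : i ∈ Finset.univ) => hpt i)) ?_
  rw [Finset.sum_ite]
  set s := Finset.filter (fun i : Fin m => (i : ℕ) < n₀) Finset.univ with hs
  set t := Finset.filter (fun i : Fin m => ¬ (i : ℕ) < n₀) Finset.univ with ht
  have hcard_s : (s.card : ℝ) ≤ n₀ := by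
    have : s.card ≤ (Finset.range n₀).card :=
      Finset.card_le_card_of_injOn (fun i => (i : ℕ))
        (by intro i hi; simp only [hs, Finset.mem_coe, Finset.mem_filter] at hi
            exact Finset.mem_range.mpr hi.2)
        (fun a _ b _ hab => Fin.val_injective hab)
    simpa using (Nat.cast_le.mpr this : ((s.card : ℝ) ≤ (Finset.range n₀).card))
  have h1 : ∑ _i ∈ s, (1:ℝ) = s.card := by simp
  -- second sum
  have hr0 : (0:ℝ) < Real.exp (-1) := Real.exp_pos _
  have hr1 : Real.exp (-1:ℝ) < 1 := by
    rw [Real.exp_lt_one_iff]; norm_num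
  have hgeosum : ∑ i ∈ t, Real.exp (-((i : ℝ) + 1)) ≤
      Real.exp (-(n₀ : ℝ) - 1) * (1 - Real.exp (-1))⁻¹ := by
    have himg : ∑ i ∈ t, Real.exp (-((i : ℝ) + 1)) =
        ∑ k ∈ t.image Fin.val, Real.exp (-((k : ℝ) + 1)) := by
      rw [Finset.sum_image]
      intro a _ b _ hab; exact Fin.val_injective hab
    rw [himg]
    have hsub : t.image Fin.val ⊆ Finset.Ico n₀ (n₀ + m) := by
      intro k hk
      simp only [ht, Finset.mem_image, Finset.mem_filter] at hk
      obtain ⟨i, ⟨_, hi⟩, rfl⟩ := hk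
      exact Finset.mem_Ico.mpr ⟨Nat.le_of_not_lt hi, lt_of_lt_of_le i.isLt (by omega)⟩
    refine le_trans (Finset.sum_le_sum_of_subset_of_nonneg hsub
      (fun k _ _ => (Real.exp_pos _).le)) ?_
    rw [Finset.sum_Ico_eq_sum_range]
    have : ∀ j ∈ Finset.range (n₀ + m - n₀), Real.exp (-(((n₀ + j : ℕ) : ℝ) + 1)) =
        Real.exp (-(n₀:ℝ) - 1) * (Real.exp (-1:ℝ)) ^ j := by
      intro j _
      rw [← Real.exp_nat_mul, ← Real.exp_add]
      congr 1; push_cast; ring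
    rw [Finset.sum_congr rfl this, ← Finset.mul_sum]
    apply mul_le_mul_of_nonneg_left _ (Real.exp_pos _).le
    calc ∑ j ∈ Finset.range (n₀ + m - n₀), (Real.exp (-1:ℝ)) ^ j ≤
        ∑' j : ℕ, (Real.exp (-1:ℝ)) ^ j :=
          Summable.sum_le_tsum _ (fun j _ => by positivity) (summable_geometric_of_lt_one hr0.le hr1)
      _ = (1 - Real.exp (-1))⁻¹ := tsum_geometric_of_lt_one hr0.le hr1
  have hgeo2 : C / η * (Real.exp (-(n₀ : ℝ) - 1) * (1 - Real.exp (-1))⁻¹) ≤ 1 := by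
    have hexpL : Real.exp (-(n₀:ℝ)) * C ≤ (Real.exp 1 - 1) * η := by
      have h1 : L ≤ (n₀ : ℝ) := Nat.le_ceil L
      have h2 : Real.exp (-(n₀:ℝ)) ≤ Real.exp (-L) := Real.exp_le_exp.mpr (by linarith)
      have h3 : Real.exp (-L) = (Real.exp 1 - 1) * η / C := by
        rw [hLdef, ← Real.log_inv, Real.exp_log (by positivity), inv_div]
      have h4 := mul_le_mul_of_nonneg_right (h2.trans_eq h3) hC.le
      rwa [div_mul_cancel₀ _ (ne_of_gt hC)] at h4
    have hinv : (1 - Real.exp (-1:ℝ))⁻¹ = Real.exp 1 / (Real.exp 1 - 1) := by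
      rw [Real.exp_neg]; field_simp
    have hkey : Real.exp (-(n₀:ℝ) - 1) = Real.exp (-(n₀:ℝ)) / Real.exp 1 := by
      rw [Real.exp_sub]
    rw [hinv, hkey]
    have hepos := Real.exp_pos (1:ℝ)
    have heq : C / η * (Real.exp (-(n₀:ℝ)) / Real.exp 1 * (Real.exp 1 / (Real.exp 1 - 1)))
        = (Real.exp (-(n₀:ℝ)) * C) / ((Real.exp 1 - 1) * η) := by
      field_simp
    rw [heq, div_le_one (by positivity)]
    exact hexpL
  have hcard_t : (t.card : ℝ) * (1 / m) ≤ 1 := by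
    have : t.card ≤ m := le_trans (Finset.card_filter_le _ _) (by simp)
    rw [mul_one_div, div_le_one hmpos]
    exact_mod_cast this
  have h2 : ∑ i ∈ t, (C / η * Real.exp (-((i : ℝ) + 1)) + 1 / m) ≤ 1 + 1 := by
    rw [Finset.sum_add_distrib, ← Finset.mul_sum, Finset.sum_const, nsmul_eq_mul]
    have := mul_le_mul_of_nonneg_left hgeosum (by positivity : (0:ℝ) ≤ C / η)
    have h3 : C / η * ∑ i ∈ t, Real.exp (-((i : ℝ) + 1)) ≤ 1 := le_trans this hgeo2
    linarith [hcard_t]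
  have hn₀L : (n₀ : ℝ) ≤ L + 1 := by
    have := Nat.ceil_lt_add_one hL0
    linarith
  calc ∑ _i ∈ s, (1:ℝ) + ∑ i ∈ t, (C / η * Real.exp (-((i : ℝ) + 1)) + 1 / m)
      ≤ (n₀ : ℝ) + (1 + 1) := by
        rw [h1]; exact add_le_add hcard_s h2
    _ ≤ L + 3 := by linarith


/-- Effective dimension bound under exponential eigenvalue decay (Theorem 9, part 2). -/
theorem effective_dimension_exponential_decay {m : ℕ} (hm : 0 < m)
    (K : Matrix (Fin m) (Fin m) ℝ) (hK : K.PosSemidef)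
    (η γ : ℝ) (hη : 0 < η) (hγ : 0 ≤ γ) (hγm : γ * m ≤ η)
    (Kγ : Matrix (Fin m) (Fin m) ℝ) (hKγ : Kγ = K + (γ * m) • 1)
    (lam : Fin m → ℝ) (hsort : Antitone lam)
    (hperm : ∃ σ : Equiv.Perm (Fin m), ∀ i, lam i = hK.1.eigenvalues (σ i))
    (C : ℝ) (hC : 0 < C) (hC' : (Real.exp 1 - 1) * η ≤ C)
    (hdecay : ∀ i : Fin m, lam i ≤ C * m * Real.exp (-((i : ℝ) + 1))) :
    (Kγ * (Kγ + (η * m) • 1)⁻¹).trace ≤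
      Real.log (C / ((Real.exp 1 - 1) * η)) + 3 := by
  obtain ⟨σ, hσ⟩ := hperm
  set U : Matrix (Fin m) (Fin m) ℝ := (hK.1.eigenvectorUnitary : Matrix (Fin m) (Fin m) ℝ) with hU
  set eig : Fin m → ℝ := hK.1.eigenvalues with heig
  have heigpos : ∀ i, 0 ≤ eig i := hK.eigenvalues_nonneg
  have hUU : star U * U = 1 := Matrix.UnitaryGroup.star_mul_self hK.1.eigenvectorUnitary
  have hUU' : U * star U = 1 := (Matrix.mem_unitaryGroup_iff).mp hK.1.eigenvectorUnitary.2
  have hspec : K = U * Matrix.diagonal eig * star U := by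
    have h := hK.1.spectral_theorem
    simpa using h
  have hmpos : (0 : ℝ) < m := by exact_mod_cast hm
  set d : Fin m → ℝ := fun i => eig i + γ * m + η * m with hd
  set e : Fin m → ℝ := fun i => eig i + γ * m with he
  have hdpos : ∀ i, 0 < d i := fun i => by
    have := heigpos i; simp only [hd]; positivity
  have hsmul : ∀ c : ℝ, (c • (1 : Matrix (Fin m) (Fin m) ℝ))
      = U * Matrix.diagonal (fun _ => c) * star U := by
    intro c
    have h := congrArg (fun X => c • X) hUU'
    rw [← Matrix.smul_one_eq_diagonal, Matrix.mul_smul, Matrix.smul_mul, mul_one, hUU']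
  have h1 : Kγ = U * Matrix.diagonal e * star U := by
    rw [hKγ, hspec, hsmul (γ * m)]
    rw [← Matrix.add_mul, ← Matrix.mul_add, Matrix.diagonal_add]
  have h2 : Kγ + (η * m) • 1 = U * Matrix.diagonal d * star U := by
    rw [h1, hsmul (η * m)]
    rw [← Matrix.add_mul, ← Matrix.mul_add, Matrix.diagonal_add]
  have h3 : (Kγ + (η * m) • 1)⁻¹ = U * Matrix.diagonal (fun i => (d i)⁻¹) * star U := by
    apply Matrix.inv_eq_right_inv
    rw [h2]
    calc U * Matrix.diagonal d * star U * (U * Matrix.diagonal (fun i => (d i)⁻¹) * star U)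
        = U * Matrix.diagonal d * (star U * U) * Matrix.diagonal (fun i => (d i)⁻¹) * star U := by
          noncomm_ring
      _ = U * (Matrix.diagonal d * Matrix.diagonal (fun i => (d i)⁻¹)) * star U := by
          rw [hUU]; noncomm_ring
      _ = 1 := by
          rw [Matrix.diagonal_mul_diagonal]
          have : (fun i => d i * (d i)⁻¹) = fun _ : Fin m => (1:ℝ) := by
            funext i; exact mul_inv_cancel₀ (hdpos i).ne'
          rw [this, Matrix.diagonal_one, mul_one, hUU']
  have h4 : Kγ * (Kγ + (η * m) • 1)⁻¹
      = U * Matrix.diagonal (fun i => e i * (d i)⁻¹) * star U := by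
    rw [h3, h1]
    calc U * Matrix.diagonal e * star U * (U * Matrix.diagonal (fun i => (d i)⁻¹) * star U)
        = U * Matrix.diagonal e * (star U * U) * Matrix.diagonal (fun i => (d i)⁻¹) * star U := by
          noncomm_ring
      _ = U * (Matrix.diagonal e * Matrix.diagonal (fun i => (d i)⁻¹)) * star U := by
          rw [hUU]; noncomm_ring
      _ = _ := by rw [Matrix.diagonal_mul_diagonal]
  have h5 : (Kγ * (Kγ + (η * m) • 1)⁻¹).trace = ∑ i, e i * (d i)⁻¹ := by
    rw [h4, Matrix.trace_mul_comm (U * Matrix.diagonal (fun i => e i * (d i)⁻¹)) (star U),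
      ← Matrix.mul_assoc, hUU, Matrix.one_mul, Matrix.trace_diagonal]
  rw [h5]
  have h6 : ∑ i, e i * (d i)⁻¹ = ∑ i, (lam i + γ * m) / (lam i + γ * m + η * m) := by
    rw [← Equiv.sum_comp σ (fun j => e j * (d j)⁻¹)]
    apply Finset.sum_congr rfl
    intro i _
    simp only [he, hd, hσ i, div_eq_mul_inv]
  rw [h6]
  exact sum_bound hm η γ C hη hγ hγm hC hC' lam
    (fun i => by rw [hσ i]; exact heigpos (σ i)) hdecay
end

section
/- Let m be a positive integer, K a real symmetric positive semidefinite m×m matrix, γ > 0, η > 0 with γm ≤ η, and K_γ = K + γmI. Let λ₁ ≥ … ≥ λ_m be the eigenvalues of K in decreasing order (with multiplicity). Then for every integer j with 0 ≤ j ≤ m, tr(K_γ (K_γ + ηmI)⁻¹) ≤ j + 1 + (1/(ηm)) · Σ_{i=j+1}^{m} λ_i. -/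
open Matrix

section aux

variable {m : ℕ}

lemma trace_conj_eq {U M : Matrix (Fin m) (Fin m) ℝ}
    (hU : star U * U = 1) : (U * M * star U).trace = M.trace := by
  rw [Matrix.trace_mul_cycle, hU, Matrix.one_mul]

lemma inv_conj {U D : Matrix (Fin m) (Fin m) ℝ}
    (hU : U * star U = 1) (hU' : star U * U = 1)
    {E : Matrix (Fin m) (Fin m) ℝ} (hDE : D * E = 1) :
    (U * D * star U)⁻¹ = U * E * star U := by
  apply Matrix.inv_eq_right_inv
  calc U * D * star U * (U * E * star U)
      = U * (D * (star U * U) * E) * star U := by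
        simp only [Matrix.mul_assoc]
    _ = 1 := by rw [hU', Matrix.mul_one, hDE, Matrix.mul_one, hU]

end aux

/-- Effective dimension is bounded by a cutoff plus the scaled eigenvalue tail sum
(key intermediate inequality in the proof of Theorem 9). -/
theorem effective_dimension_cutoff_bound {m : ℕ} (hm : 0 < m)
    (K : Matrix (Fin m) (Fin m) ℝ) (hK : K.PosSemidef)
    (η γ : ℝ) (hη : 0 < η) (hγ : 0 < γ) (hγm : γ * m ≤ η)
    (Kγ : Matrix (Fin m) (Fin m) ℝ) (hKγ : Kγ = K + (γ * m) • 1)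
    (lam : Fin m → ℝ) (hsort : Antitone lam)
    (hperm : ∃ σ : Equiv.Perm (Fin m), ∀ i, lam i = hK.1.eigenvalues (σ i))
    (j : ℕ) (hj : j ≤ m) :
    (Kγ * (Kγ + (η * m) • 1)⁻¹).trace ≤
      (j : ℝ) + 1 + (1 / (η * m)) *
        ∑ i ∈ Finset.univ.filter (fun i : Fin m => j ≤ (i : ℕ)), lam i := by
  have hmR : (0:ℝ) < m := by exact_mod_cast hm
  set a : ℝ := γ * m with ha
  set b : ℝ := η * m with hb
  have ha0 : 0 < a := mul_pos hγ hmR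
  have hb0 : 0 < b := mul_pos hη hmR
  set U : Matrix (Fin m) (Fin m) ℝ := (hK.1.eigenvectorUnitary : Matrix (Fin m) (Fin m) ℝ)
  have hU : U * star U = 1 := (Matrix.mem_unitaryGroup_iff).mp hK.1.eigenvectorUnitary.2
  have hU' : star U * U = 1 := (Matrix.mem_unitaryGroup_iff').mp hK.1.eigenvectorUnitary.2
  set μ : Fin m → ℝ := hK.1.eigenvalues with hμ
  have hμ0 : ∀ i, 0 ≤ μ i := fun i => hK.eigenvalues_nonneg i
  have hKspec : K = U * diagonal μ * star U := by
    have := hK.1.spectral_theorem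
    simpa using this
  have hconj : ∀ c : ℝ, K + c • (1 : Matrix (Fin m) (Fin m) ℝ)
      = U * diagonal (fun i => μ i + c) * star U := by
    intro c
    have h1 : c • (1 : Matrix (Fin m) (Fin m) ℝ) = U * (c • 1) * star U := by
      rw [Matrix.mul_smul, Matrix.smul_mul, Matrix.mul_one, hU]
    rw [hKspec, h1, ← Matrix.add_mul, ← Matrix.mul_add]
    congr 2
    ext i k
    rcases eq_or_ne i k with h | h <;>
      simp [h, Matrix.diagonal_apply, Matrix.one_apply]
  have hKγ' : Kγ = U * diagonal (fun i => μ i + a) * star U := by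
    rw [hKγ]; exact hconj a
  have hden : Kγ + b • 1 = U * diagonal (fun i => μ i + a + b) * star U := by
    rw [hKγ, add_assoc, ← add_smul]
    have := hconj (a + b)
    simpa [add_assoc] using this
  have hdpos : ∀ i, 0 < μ i + a + b := fun i => by
    have := hμ0 i; linarith
  have hinv : (Kγ + b • 1)⁻¹
      = U * diagonal (fun i => (μ i + a + b)⁻¹) * star U := by
    rw [hden]
    refine inv_conj hU hU' ?_
    have hfun : (fun i => (μ i + a + b) * (μ i + a + b)⁻¹) = fun _ => (1:ℝ) :=
      funext fun i => mul_inv_cancel₀ (hdpos i).ne'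
    rw [Matrix.diagonal_mul_diagonal, hfun, Matrix.diagonal_one]
  have htr : (Kγ * (Kγ + b • 1)⁻¹).trace
      = ∑ i, (μ i + a) / (μ i + a + b) := by
    rw [hinv, hKγ']
    have : U * diagonal (fun i => μ i + a) * star U *
        (U * diagonal (fun i => (μ i + a + b)⁻¹) * star U)
        = U * (diagonal (fun i => μ i + a) * diagonal (fun i => (μ i + a + b)⁻¹)) * star U := by
      calc U * diagonal (fun i => μ i + a) * star U *
          (U * diagonal (fun i => (μ i + a + b)⁻¹) * star U)
          = U * (diagonal (fun i => μ i + a) * (star U * U) *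
              diagonal (fun i => (μ i + a + b)⁻¹)) * star U := by
            simp only [Matrix.mul_assoc]
        _ = _ := by rw [hU', Matrix.mul_one]
    rw [this, trace_conj_eq hU', Matrix.diagonal_mul_diagonal, Matrix.trace_diagonal]
    simp [div_eq_mul_inv]
  rw [htr]
  -- replace μ by lam using the permutation
  obtain ⟨σ, hσ⟩ := hperm
  have hsum : ∑ i, (μ i + a) / (μ i + a + b) = ∑ i, (lam i + a) / (lam i + a + b) := by
    rw [← Equiv.sum_comp σ (fun i => (μ i + a) / (μ i + a + b))]
    exact Finset.sum_congr rfl fun i _ => by rw [hσ i]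
  rw [hsum]
  have hlam0 : ∀ i, 0 ≤ lam i := fun i => by rw [hσ i]; exact hμ0 _
  -- split the sum
  have hsplit : (Finset.univ : Finset (Fin m)) =
      Finset.univ.filter (fun i : Fin m => (i : ℕ) < j) ∪
      Finset.univ.filter (fun i : Fin m => j ≤ (i : ℕ)) := by
    ext i; simp [lt_or_ge]
  have hdisj : Disjoint (Finset.univ.filter (fun i : Fin m => (i : ℕ) < j))
      (Finset.univ.filter (fun i : Fin m => j ≤ (i : ℕ))) := by
    simp [Finset.disjoint_filter]
  have hsum2 : ∑ i, (lam i + a) / (lam i + a + b)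
      = (∑ i ∈ Finset.univ.filter (fun i : Fin m => (i : ℕ) < j),
          (lam i + a) / (lam i + a + b))
        + ∑ i ∈ Finset.univ.filter (fun i : Fin m => j ≤ (i : ℕ)),
          (lam i + a) / (lam i + a + b) := by
    rw [← Finset.sum_union hdisj, ← hsplit]
  rw [hsum2]
  have hcard1 : (Finset.univ.filter (fun i : Fin m => (i : ℕ) < j)).card ≤ j := by
    have : (Finset.univ.filter (fun i : Fin m => (i : ℕ) < j)).card ≤ (Finset.range j).card := by
      refine Finset.card_le_card_of_injOn (fun i => (i : ℕ)) ?_ ?_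
      · intro i hi; simp at hi ⊢; exact hi
      · intro x _ y _ h; exact Fin.val_injective h
    simpa using this
  have hbound1 : ∑ i ∈ Finset.univ.filter (fun i : Fin m => (i : ℕ) < j),
      (lam i + a) / (lam i + a + b) ≤ (j : ℝ) := by
    calc ∑ i ∈ Finset.univ.filter (fun i : Fin m => (i : ℕ) < j),
        (lam i + a) / (lam i + a + b)
        ≤ ∑ _i ∈ Finset.univ.filter (fun i : Fin m => (i : ℕ) < j), (1:ℝ) := by
          apply Finset.sum_le_sum
          intro i _
          rw [div_le_one (by have := hlam0 i; linarith)]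
          linarith
      _ ≤ (j : ℝ) := by
          simp only [Finset.sum_const, nsmul_eq_mul, mul_one]
          exact_mod_cast hcard1
  have hbound2 : ∑ i ∈ Finset.univ.filter (fun i : Fin m => j ≤ (i : ℕ)),
      (lam i + a) / (lam i + a + b)
      ≤ 1 + (1 / b) * ∑ i ∈ Finset.univ.filter (fun i : Fin m => j ≤ (i : ℕ)), lam i := by
    have step : ∀ i ∈ Finset.univ.filter (fun i : Fin m => j ≤ (i : ℕ)),
        (lam i + a) / (lam i + a + b) ≤ lam i / b + γ / η := by
      intro i _
      have h1 : (lam i + a) / (lam i + a + b) ≤ (lam i + a) / b := by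
        apply div_le_div_of_nonneg_left (by have := hlam0 i; linarith) hb0
        have := hlam0 i; linarith
      have h2 : (lam i + a) / b = lam i / b + a / b := add_div _ _ _
      have h3 : a / b ≤ γ / η := by
        rw [ha, hb, mul_div_mul_right _ _ hmR.ne']
      linarith
    calc ∑ i ∈ Finset.univ.filter (fun i : Fin m => j ≤ (i : ℕ)),
        (lam i + a) / (lam i + a + b)
        ≤ ∑ i ∈ Finset.univ.filter (fun i : Fin m => j ≤ (i : ℕ)),
          (lam i / b + γ / η) := Finset.sum_le_sum step
      _ = (∑ i ∈ Finset.univ.filter (fun i : Fin m => j ≤ (i : ℕ)), lam i) / b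
          + (Finset.univ.filter (fun i : Fin m => j ≤ (i : ℕ))).card * (γ / η) := by
          rw [Finset.sum_add_distrib, Finset.sum_div, Finset.sum_const, nsmul_eq_mul]
      _ ≤ 1 + (1 / b) * ∑ i ∈ Finset.univ.filter (fun i : Fin m => j ≤ (i : ℕ)), lam i := by
          have hcard : ((Finset.univ.filter (fun i : Fin m => j ≤ (i : ℕ))).card : ℝ) ≤ m := by
            exact_mod_cast (Finset.card_filter_le _ _).trans (by simp)
          have hγη : (m : ℝ) * (γ / η) ≤ 1 := by
            have he : (m : ℝ) * (γ / η) = (γ * m) / η := by ring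
            rw [he, div_le_one hη]
            exact hγm
          have : ((Finset.univ.filter (fun i : Fin m => j ≤ (i : ℕ))).card : ℝ) * (γ / η) ≤ 1 := by
            calc ((Finset.univ.filter (fun i : Fin m => j ≤ (i : ℕ))).card : ℝ) * (γ / η)
                ≤ (m : ℝ) * (γ / η) := by
                  apply mul_le_mul_of_nonneg_right hcard
                  positivity
              _ ≤ 1 := hγη
          rw [div_eq_mul_inv, one_div, mul_comm]
          linarith
  calc _ ≤ (j:ℝ) + (1 + (1 / b) * ∑ i ∈ Finset.univ.filter (fun i : Fin m => j ≤ (i : ℕ)), lam i) :=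
        add_le_add hbound1 hbound2
    _ = _ := by ring
end

section
/- Let m be a positive integer, B > 0, and 0 < ε ≤ 3. Set λ = ε²/(324B), η = ε³/(5832B), and γ = ε³/(5832Bm). Let K be a real symmetric positive semidefinite m×m matrix, K_γ = K + γmI, and let K̄_γ be a real symmetric positive semidefinite m×m matrix with K̄_γ ⪯ K_γ ⪯ K̄_γ + ηmI. Let Y ∈ ℝ^m with all entries y_i in [0,1], set ᾱ_γ = (K̄_γ + λmI)⁻¹ Y and α* = K_γ⁻¹ K̄_γ ᾱ_γ. Let α̃ ∈ ℝ^m be any vector such that |(K_γ α̃)_i − (K_γ α*)_i| ≤ ε/4 for every i. Then for every α_B ∈ ℝ^m with α_BᵀK α_B ≤ B and ‖K α_B − Y‖₂ ≤ √m, (1/m) Σ_{i=1}^m ( clip_{0,1}((K_γ α̃)_i) − y_i )² ≤ (1/m)‖K α_B − Y‖₂² + ε. -/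
open Matrix

/-- Clipping a real number to the interval [0,1]. -/
noncomputable def clip01 (x : ℝ) : ℝ := max 0 (min 1 x)

namespace CompressionAux

variable {m : ℕ}

lemma dself (v : Fin m → ℝ) : v ⬝ᵥ v = ∑ i, v i ^ 2 := by
  simp [dotProduct, sq]

lemma dself_nonneg (v : Fin m → ℝ) : 0 ≤ v ⬝ᵥ v := by
  rw [dself]; positivity

lemma l2_nonneg (v : Fin m → ℝ) : 0 ≤ l2norm v := Real.sqrt_nonneg _

lemma l2_sq (v : Fin m → ℝ) : l2norm v ^ 2 = v ⬝ᵥ v := by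
  rw [dself, l2norm, Real.sq_sqrt]; positivity

lemma l2_le_of_sq_le {v : Fin m → ℝ} {t : ℝ} (ht : 0 ≤ t) (h : v ⬝ᵥ v ≤ t ^ 2) :
    l2norm v ≤ t := by
  rw [dself] at h
  calc l2norm v ≤ Real.sqrt (t ^ 2) := Real.sqrt_le_sqrt h
  _ = t := Real.sqrt_sq ht

lemma l2_eq_norm (v : Fin m → ℝ) :
    l2norm v = ‖(WithLp.equiv 2 (Fin m → ℝ)).symm v‖ := by
  rw [EuclideanSpace.norm_eq]
  simp [l2norm, Real.norm_eq_abs, sq_abs]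

lemma l2_triangle (u w : Fin m → ℝ) : l2norm (u + w) ≤ l2norm u + l2norm w := by
  rw [l2_eq_norm, l2_eq_norm, l2_eq_norm]
  exact norm_add_le _ _

lemma symm_of {A : Matrix (Fin m) (Fin m) ℝ} (hA : A.IsHermitian) : Aᵀ = A := by
  ext i j
  simpa using congrFun (congrFun hA i) j

lemma dot_symm (A : Matrix (Fin m) (Fin m) ℝ) (hA : Aᵀ = A) (x y : Fin m → ℝ) :
    x ⬝ᵥ (A *ᵥ y) = y ⬝ᵥ (A *ᵥ x) := by
  rw [dotProduct_mulVec, ← mulVec_transpose, hA]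
  exact dotProduct_comm _ _

lemma psd_nonneg {A : Matrix (Fin m) (Fin m) ℝ} (hA : A.PosSemidef) (x : Fin m → ℝ) :
    0 ≤ x ⬝ᵥ (A *ᵥ x) := by
  simpa using hA.re_dotProduct_nonneg x

lemma smul_one_posdef {c : ℝ} (hc : 0 < c) :
    (c • (1 : Matrix (Fin m) (Fin m) ℝ)).PosDef := by
  rw [smul_one_eq_diagonal]
  exact posDef_diagonal_iff.mpr fun _ => hc

lemma inv_cancel {A : Matrix (Fin m) (Fin m) ℝ} (hA : A.PosDef) (x : Fin m → ℝ) :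
    A *ᵥ (A⁻¹ *ᵥ x) = x := by
  rw [mulVec_mulVec, Matrix.mul_nonsing_inv _ ((Matrix.isUnit_iff_isUnit_det A).mp hA.isUnit),
    one_mulVec]

/-- For `0 ⪯ D ⪯ c•1` we have `‖Dx‖² ≤ c ⟨x, Dx⟩`. -/
lemma mulVec_sq_le {D : Matrix (Fin m) (Fin m) ℝ} (hD : D.PosSemidef) {c : ℝ}
    (h2 : (c • (1 : Matrix (Fin m) (Fin m) ℝ) - D).PosSemidef) (x : Fin m → ℝ) :
    (D *ᵥ x) ⬝ᵥ (D *ᵥ x) ≤ c * (x ⬝ᵥ (D *ᵥ x)) := by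
  classical
  open scoped MatrixOrder in
  set S := CFC.sqrt D with hS
  have hSh : Sᵀ = S := symm_of (open scoped MatrixOrder in (CFC.sqrt_nonneg D).posSemidef.isHermitian)
  have hSS : S * S = D := (open scoped MatrixOrder in CFC.sqrt_mul_sqrt_self D hD.nonneg)
  set y := S *ᵥ x with hy
  have hDx : D *ᵥ x = S *ᵥ y := by rw [hy, mulVec_mulVec, hSS]
  have h1 : (D *ᵥ x) ⬝ᵥ (D *ᵥ x) = y ⬝ᵥ (D *ᵥ y) := by
    rw [hDx, dot_symm S hSh (S *ᵥ y) y, mulVec_mulVec, hSS]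
  have h2' : x ⬝ᵥ (D *ᵥ x) = y ⬝ᵥ y := by
    conv_lhs => rw [hDx]
    rw [dot_symm S hSh x y]
  have h3 := psd_nonneg h2 y
  rw [sub_mulVec, dotProduct_sub, smul_mulVec, one_mulVec, dotProduct_smul] at h3
  rw [h1, h2']
  simpa using h3

/-- Ridge regression optimality. -/
lemma ridge {A : Matrix (Fin m) (Fin m) ℝ} (hA : A.PosSemidef) {c : ℝ}
    {Y β : Fin m → ℝ} (hβ : (A + c • 1) *ᵥ β = Y) (hc : 0 ≤ c) (α : Fin m → ℝ) :
    (A *ᵥ β - Y) ⬝ᵥ (A *ᵥ β - Y) + c * (β ⬝ᵥ (A *ᵥ β)) ≤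
      (A *ᵥ α - Y) ⬝ᵥ (A *ᵥ α - Y) + c * (α ⬝ᵥ (A *ᵥ α)) := by
  have hAh : Aᵀ = A := symm_of hA.isHermitian
  set δ := α - β with hδ
  have hα : α = β + δ := by rw [hδ]; ring
  have hY : A *ᵥ β + c • β - Y = 0 := by
    rw [← hβ, add_mulVec, smul_mulVec, one_mulVec]; ring
  have hkey : A *ᵥ (A *ᵥ β - Y) + c • (A *ᵥ β) = 0 := by
    have : A *ᵥ (A *ᵥ β + c • β - Y) = 0 := by rw [hY, mulVec_zero]
    rw [mulVec_sub, mulVec_add, mulVec_smul] at this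
    rw [mulVec_sub, show A *ᵥ (A *ᵥ β) - A *ᵥ Y + c • (A *ᵥ β) =
      A *ᵥ (A *ᵥ β) + c • (A *ᵥ β) - A *ᵥ Y from by abel]
    exact this
  have hcross : (A *ᵥ β - Y) ⬝ᵥ (A *ᵥ δ) + c * (δ ⬝ᵥ (A *ᵥ β)) = 0 := by
    have h1 : (A *ᵥ β - Y) ⬝ᵥ (A *ᵥ δ) = δ ⬝ᵥ (A *ᵥ (A *ᵥ β - Y)) := by
      rw [dot_symm A hAh (A *ᵥ β - Y) δ, dotProduct_comm]
    have := congrArg (fun z => δ ⬝ᵥ z) hkey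
    simp only [dotProduct_add, dotProduct_smul, dotProduct_zero, smul_eq_mul] at this
    rw [h1]
    linarith [this]
  have expand1 : (A *ᵥ α - Y) ⬝ᵥ (A *ᵥ α - Y) =
      (A *ᵥ β - Y) ⬝ᵥ (A *ᵥ β - Y) + 2 * ((A *ᵥ β - Y) ⬝ᵥ (A *ᵥ δ)) +
        (A *ᵥ δ) ⬝ᵥ (A *ᵥ δ) := by
    rw [hα, mulVec_add]
    have : A *ᵥ β + A *ᵥ δ - Y = (A *ᵥ β - Y) + A *ᵥ δ := by ring
    rw [this, dotProduct_add, add_dotProduct, add_dotProduct,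
      dotProduct_comm (A *ᵥ δ) (A *ᵥ β - Y)]
    ring
  have expand2 : α ⬝ᵥ (A *ᵥ α) =
      β ⬝ᵥ (A *ᵥ β) + 2 * (δ ⬝ᵥ (A *ᵥ β)) + δ ⬝ᵥ (A *ᵥ δ) := by
    rw [hα, mulVec_add, dotProduct_add, add_dotProduct, add_dotProduct,
      dot_symm A hAh β δ]
    ring
  have hq1 : 0 ≤ (A *ᵥ δ) ⬝ᵥ (A *ᵥ δ) := dself_nonneg _
  have hq2 : 0 ≤ δ ⬝ᵥ (A *ᵥ δ) := psd_nonneg hA δ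
  rw [expand1, expand2]
  nlinarith [hcross]


lemma l2_neg (v : Fin m → ℝ) : l2norm (-v) = l2norm v := by
  unfold l2norm; congr 1; simp

lemma l2_sub_le (u w : Fin m → ℝ) : l2norm (u - w) ≤ l2norm u + l2norm w := by
  rw [sub_eq_add_neg]
  calc l2norm (u + -w) ≤ l2norm u + l2norm (-w) := l2_triangle u (-w)
  _ = l2norm u + l2norm w := by rw [l2_neg]

lemma clip_sq_le {t y : ℝ} (h0 : 0 ≤ y) (h1 : y ≤ 1) : (clip01 t - y) ^ 2 ≤ (t - y) ^ 2 := by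
  unfold clip01
  rcases le_total t 0 with h | h
  · rw [max_eq_left (le_trans (min_le_right 1 t) h)]
    nlinarith
  · rw [max_eq_right (le_min (by linarith) h)]
    rcases le_total 1 t with h2 | h2
    · rw [min_eq_left h2]; nlinarith
    · rw [min_eq_right h2]


end CompressionAux


set_option maxHeartbeats 1000000 in
open CompressionAux in
/-- Accuracy guarantee of the compression scheme (core of Theorem 10). -/
theorem compression_accuracy {m : ℕ} (hm : 0 < m) (B ε : ℝ) (hB : 0 < B)
    (hε0 : 0 < ε) (hε3 : ε ≤ 3)
    (lam η γ : ℝ) (hlam : lam = ε ^ 2 / (324 * B))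
    (hη : η = ε ^ 3 / (5832 * B)) (hγ : γ = ε ^ 3 / (5832 * B * m))
    (K : Matrix (Fin m) (Fin m) ℝ) (hK : K.PosSemidef)
    (Kγ : Matrix (Fin m) (Fin m) ℝ) (hKγ : Kγ = K + (γ * m) • 1)
    (Kbar : Matrix (Fin m) (Fin m) ℝ) (hKbar : Kbar.PosSemidef)
    (hsand1 : (Kγ - Kbar).PosSemidef)
    (hsand2 : (Kbar + (η * m) • 1 - Kγ).PosSemidef)
    (Y : Fin m → ℝ) (hY : ∀ i, Y i ∈ Set.Icc (0 : ℝ) 1)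
    (αbarγ αstar : Fin m → ℝ)
    (hαbarγ : αbarγ = (Kbar + (lam * m) • 1)⁻¹ *ᵥ Y)
    (hαstar : αstar = Kγ⁻¹ *ᵥ (Kbar *ᵥ αbarγ))
    (αtil : Fin m → ℝ)
    (hαtil : ∀ i, |(Kγ *ᵥ αtil) i - (Kγ *ᵥ αstar) i| ≤ ε / 4)
    (αB : Fin m → ℝ) (hαB : αB ⬝ᵥ (K *ᵥ αB) ≤ B)
    (hloss : l2norm (K *ᵥ αB - Y) ≤ Real.sqrt m) :
    (1 / m) * ∑ i, (clip01 ((Kγ *ᵥ αtil) i) - Y i) ^ 2 ≤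
      (1 / m) * l2norm (K *ᵥ αB - Y) ^ 2 + ε := by
  classical
  have hm' : (0:ℝ) < m := by exact_mod_cast hm
  set sm := Real.sqrt m with hsmdef
  have hsm : sm ^ 2 = m := Real.sq_sqrt hm'.le
  have hsm0 : 0 ≤ sm := Real.sqrt_nonneg _
  have hε36 : 0 ≤ ε / 36 * sm := mul_nonneg (by linarith) hsm0
  have hε18 : 0 ≤ ε / 18 * sm := mul_nonneg (by linarith) hsm0
  have hε4 : 0 ≤ ε / 4 * sm := mul_nonneg (by linarith) hsm0
  have hγm : γ * (m:ℝ) = η := by rw [hγ, hη]; field_simp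
  have hη0 : 0 < η := by rw [hη]; positivity
  have hKγ' : Kγ = K + η • 1 := by rw [hKγ, hγm]
  have hKγpd : Kγ.PosDef := by
    rw [hKγ']; exact Matrix.PosDef.posSemidef_add hK (smul_one_posdef hη0)
  have hl : 0 < lam := by rw [hlam]; positivity
  have hc0 : 0 < lam * (m:ℝ) := by positivity
  have hMpd : (Kbar + (lam * (m:ℝ)) • 1).PosDef :=
    Matrix.PosDef.posSemidef_add hKbar (smul_one_posdef hc0)
  have hβY : (Kbar + (lam * (m:ℝ)) • 1) *ᵥ αbarγ = Y := by
    rw [hαbarγ]; exact inv_cancel hMpd Y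
  have hstar : Kγ *ᵥ αstar = Kbar *ᵥ αbarγ := by
    rw [hαstar]; exact inv_cancel hKγpd _
  have hKsym : Kᵀ = K := symm_of hK.isHermitian
  -- comparison vector
  obtain ⟨v, hv⟩ : ∃ v, Kγ⁻¹ *ᵥ αB = v := ⟨_, rfl⟩
  obtain ⟨w, hw'⟩ : ∃ w, K *ᵥ v = w := ⟨_, rfl⟩
  have hw : w = K *ᵥ v := hw'.symm
  have hKγv : Kγ *ᵥ v = αB := by rw [← hv]; exact inv_cancel hKγpd αB
  have hMcomm : Kγ * K = K * Kγ := by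
    rw [hKγ', add_mul, mul_add, Matrix.smul_mul, Matrix.mul_smul, one_mul, mul_one]
  have hKγmul : ∀ x, Kγ *ᵥ x = K *ᵥ x + η • x := fun x => by
    rw [hKγ', add_mulVec, smul_mulVec, one_mulVec]
  have hKγw : Kγ *ᵥ w = K *ᵥ αB := by
    rw [hw, mulVec_mulVec, hMcomm, ← mulVec_mulVec, hKγv]
  -- quadratic-form bound for w
  have hαBw : αB = w + η • v := by rw [← hKγv, hKγmul v, hw]
  have hvKw : v ⬝ᵥ (K *ᵥ w) = w ⬝ᵥ w := by
    rw [dot_symm K hKsym v w, ← hw]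
  have e1 : αB ⬝ᵥ (K *ᵥ αB) =
      w ⬝ᵥ (K *ᵥ w) + 2 * η * (w ⬝ᵥ w) + η ^ 2 * (v ⬝ᵥ w) := by
    conv_lhs => rw [hαBw]
    rw [mulVec_add, mulVec_smul]
    simp only [dotProduct_add, add_dotProduct, dotProduct_smul, smul_dotProduct,
      smul_eq_mul]
    rw [hvKw, ← hw]
    ring
  have e2 : w ⬝ᵥ (Kγ *ᵥ w) = w ⬝ᵥ (K *ᵥ w) + η * (w ⬝ᵥ w) := by
    rw [hKγmul w, dotProduct_add, dotProduct_smul, smul_eq_mul]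
  have hvw : 0 ≤ v ⬝ᵥ w := by rw [hw]; exact psd_nonneg hK v
  have hww : 0 ≤ w ⬝ᵥ w := dself_nonneg w
  have hquad : w ⬝ᵥ (Kγ *ᵥ w) ≤ B := by nlinarith [hαB, e1, e2]
  have hwKbar : 0 ≤ w ⬝ᵥ (Kbar *ᵥ w) := psd_nonneg hKbar w
  have hDquad : w ⬝ᵥ ((Kγ - Kbar) *ᵥ w) ≤ B := by
    rw [sub_mulVec, dotProduct_sub]
    linarith
  have hwbarB : w ⬝ᵥ (Kbar *ᵥ w) ≤ B := by
    have := psd_nonneg hsand1 w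
    rw [sub_mulVec, dotProduct_sub] at this
    linarith
  -- bound on ‖(Kγ - Kbar) w‖
  have hsand2' : ((η * (m:ℝ)) • (1 : Matrix (Fin m) (Fin m) ℝ) - (Kγ - Kbar)).PosSemidef := by
    have h : (η * (m:ℝ)) • (1 : Matrix (Fin m) (Fin m) ℝ) - (Kγ - Kbar)
        = Kbar + (η * (m:ℝ)) • 1 - Kγ := by abel
    rw [h]; exact hsand2
  have hDw : l2norm ((Kγ - Kbar) *ᵥ w) ≤ ε / 36 * sm := by
    apply l2_le_of_sq_le hε36
    have h1 := mulVec_sq_le hsand1 hsand2' w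
    have h2 : η * (m:ℝ) * (w ⬝ᵥ ((Kγ - Kbar) *ᵥ w)) ≤ η * (m:ℝ) * B :=
      mul_le_mul_of_nonneg_left hDquad (by positivity)
    have h3 : η * (m:ℝ) * B = ε ^ 3 * (m:ℝ) / 5832 := by
      rw [hη]; field_simp
    have h4 : (ε / 36 * sm) ^ 2 = ε ^ 2 * (m:ℝ) / 1296 := by
      rw [mul_pow, hsm]; ring
    have hε2m : 0 ≤ ε ^ 2 * (m:ℝ) := by positivity
    have h6 : ε * (ε ^ 2 * (m:ℝ)) ≤ 3 * (ε ^ 2 * (m:ℝ)) :=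
      mul_le_mul_of_nonneg_right hε3 hε2m
    have h5 : ε ^ 3 * (m:ℝ) / 5832 ≤ ε ^ 2 * (m:ℝ) / 1296 := by linarith
    linarith
  -- loss of the comparison point under Kbar
  set L := l2norm (K *ᵥ αB - Y) with hL
  have hL0 : 0 ≤ L := l2_nonneg _
  have hid : Kbar *ᵥ w - Y = (K *ᵥ αB - Y) - (Kγ - Kbar) *ᵥ w := by
    rw [sub_mulVec, hKγw]; abel
  have hbarw : l2norm (Kbar *ᵥ w - Y) ≤ L + ε / 36 * sm := by
    rw [hid]
    calc l2norm ((K *ᵥ αB - Y) - (Kγ - Kbar) *ᵥ w)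
        ≤ L + l2norm ((Kγ - Kbar) *ᵥ w) := l2_sub_le _ _
      _ ≤ L + ε / 36 * sm := by linarith
  -- ridge optimality
  have hridge := ridge hKbar hβY hc0.le w
  have hαKbar : 0 ≤ αbarγ ⬝ᵥ (Kbar *ᵥ αbarγ) := psd_nonneg hKbar αbarγ
  have hcB : lam * (m:ℝ) * B = (ε / 18 * sm) ^ 2 := by
    rw [hlam, mul_pow, hsm]; field_simp; ring
  set N1 := l2norm (Kbar *ᵥ αbarγ - Y) with hN1def
  have hN10 : 0 ≤ N1 := l2_nonneg _
  have hN1sq : N1 ^ 2 ≤ (L + ε / 36 * sm) ^ 2 + (ε / 18 * sm) ^ 2 := by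
    have hs1 : N1 ^ 2 = (Kbar *ᵥ αbarγ - Y) ⬝ᵥ (Kbar *ᵥ αbarγ - Y) := l2_sq _
    have hs2 : (Kbar *ᵥ w - Y) ⬝ᵥ (Kbar *ᵥ w - Y) ≤ (L + ε / 36 * sm) ^ 2 := by
      rw [← l2_sq]
      exact pow_le_pow_left₀ (l2_nonneg _) hbarw 2
    have hs3 : lam * (m:ℝ) * (w ⬝ᵥ (Kbar *ᵥ w)) ≤ (ε / 18 * sm) ^ 2 := by
      rw [← hcB]
      exact mul_le_mul_of_nonneg_left hwbarB hc0.le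
    nlinarith [mul_nonneg hc0.le hαKbar]
  have hN1le : N1 ≤ L + ε / 36 * sm + ε / 18 * sm := by
    nlinarith [hN10, hN1sq, hL0, hε36, hε18]
  -- approximation step
  have htilde : l2norm (Kγ *ᵥ αtil - Kbar *ᵥ αbarγ) ≤ ε / 4 * sm := by
    apply l2_le_of_sq_le hε4
    rw [← hstar, dself]
    have hsum : ∀ i ∈ Finset.univ, ((Kγ *ᵥ αtil - Kγ *ᵥ αstar) i) ^ 2 ≤ (ε / 4) ^ 2 := by
      intro i _
      have h := hαtil i
      have := abs_le.mp h
      simp only [Pi.sub_apply]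
      nlinarith [this.1, this.2]
    calc ∑ i, ((Kγ *ᵥ αtil - Kγ *ᵥ αstar) i) ^ 2 ≤ ∑ _i : Fin m, (ε / 4) ^ 2 :=
          Finset.sum_le_sum hsum
      _ = (m:ℝ) * (ε / 4) ^ 2 := by rw [Finset.sum_const]; simp [mul_comm]
      _ = (ε / 4 * sm) ^ 2 := by rw [mul_pow, hsm]; ring
  have hN2 : l2norm (Kγ *ᵥ αtil - Y) ≤ L + ε / 3 * sm := by
    have hsplit : Kγ *ᵥ αtil - Y = (Kbar *ᵥ αbarγ - Y) + (Kγ *ᵥ αtil - Kbar *ᵥ αbarγ) := by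
      abel
    rw [hsplit]
    calc l2norm ((Kbar *ᵥ αbarγ - Y) + (Kγ *ᵥ αtil - Kbar *ᵥ αbarγ))
        ≤ N1 + l2norm (Kγ *ᵥ αtil - Kbar *ᵥ αbarγ) := l2_triangle _ _
      _ ≤ (L + ε / 36 * sm + ε / 18 * sm) + ε / 4 * sm := by linarith
      _ = L + ε / 3 * sm := by ring
  -- clipping and conclusion
  have hclip : ∑ i, (clip01 ((Kγ *ᵥ αtil) i) - Y i) ^ 2 ≤ (L + ε / 3 * sm) ^ 2 := by
    have hstep : ∑ i, (clip01 ((Kγ *ᵥ αtil) i) - Y i) ^ 2 ≤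
        ∑ i, ((Kγ *ᵥ αtil - Y) i) ^ 2 := by
      apply Finset.sum_le_sum
      intro i _
      have hYi := hY i
      simpa using clip_sq_le hYi.1 hYi.2
    have h2 : ∑ i, ((Kγ *ᵥ αtil - Y) i) ^ 2 = l2norm (Kγ *ᵥ αtil - Y) ^ 2 := by
      rw [l2_sq, dself]
    have h3 : l2norm (Kγ *ᵥ αtil - Y) ^ 2 ≤ (L + ε / 3 * sm) ^ 2 :=
      pow_le_pow_left₀ (l2_nonneg _) hN2 2
    linarith
  have hfinal : ∑ i, (clip01 ((Kγ *ᵥ αtil) i) - Y i) ^ 2 ≤ L ^ 2 + ε * m := by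
    have hexp : (L + ε / 3 * sm) ^ 2 = L ^ 2 + 2 / 3 * ε * L * sm + ε ^ 2 / 9 * (m:ℝ) := by
      rw [show (L + ε / 3 * sm) ^ 2 = L ^ 2 + 2 / 3 * ε * L * sm + ε ^ 2 / 9 * sm ^ 2 by ring,
        hsm]
    have t0 : 0 ≤ 2 / 3 * ε * sm := by positivity
    have t1 : 2 / 3 * ε * sm * L ≤ 2 / 3 * ε * sm * sm :=
      mul_le_mul_of_nonneg_left hloss t0
    have t2 : sm * sm = (m:ℝ) := by rw [← hsm, pow_two]
    have h6 : ε * ε ≤ 3 * ε := mul_le_mul_of_nonneg_right hε3 hε0.le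
    have h7 : ε * ε * (m:ℝ) ≤ 3 * ε * (m:ℝ) := mul_le_mul_of_nonneg_right h6 hm'.le
    have t3 : 2 / 3 * ε * (sm * sm) ≤ 2 / 3 * ε * (m:ℝ) := by rw [t2]
    linarith [hclip, hexp, t1, t3, h7]
  have hdiv : (1 / (m:ℝ)) * (L ^ 2 + ε * m) = (1 / (m:ℝ)) * L ^ 2 + ε := by
    field_simp
  calc (1 / (m:ℝ)) * ∑ i, (clip01 ((Kγ *ᵥ αtil) i) - Y i) ^ 2
      ≤ (1 / (m:ℝ)) * (L ^ 2 + ε * m) := by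
        apply mul_le_mul_of_nonneg_left hfinal (by positivity)
    _ = (1 / (m:ℝ)) * L ^ 2 + ε := hdiv
end
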